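/- arXiv:1806.04785 — 6 statements merged into one kernel-verified Lean document; each statement's English description precedes it below -/
import Mathlib

section
/- Let 0 < q < 1 be a real number and N a positive integer. Then ∑_{m=1}^{N} (-1)^{m-1} q^{m(m+1)/2} / [m]_q · C_q(N,m) = ∑_{n=1}^{N} q^n / [n]_q, where [m]_q = (1-q^m)/(1-q) and C_q(N,m) is the q-binomial coefficient. -/
noncomputable def qint (q : ℝ) (m : ℕ) : ℝ := (1 - q ^ m) / (1 - q)

noncomputable def qfact (q : ℝ) (m : ℕ) : ℝ := ∏ a ∈ Finset.Icc 1 m, qint q a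

noncomputable def qbinom (q : ℝ) (N m : ℕ) : ℝ := qfact q N / (qfact q m * qfact q (N - m))

variable {q : ℝ}

lemma qint_pos (hq0 : 0 < q) (hq1 : q < 1) {m : ℕ} (hm : 1 ≤ m) : 0 < qint q m := by
  have h1 : q ^ m < 1 := pow_lt_one₀ hq0.le hq1 (by omega)
  have h2 : (0:ℝ) < 1 - q := by linarith
  exact div_pos (by linarith) h2

lemma qfact_pos (hq0 : 0 < q) (hq1 : q < 1) (m : ℕ) : 0 < qfact q m := by
  refine Finset.prod_pos fun a ha => qint_pos hq0 hq1 (Finset.mem_Icc.mp ha).1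

lemma qfact_zero : qfact q 0 = 1 := by simp [qfact]

lemma qfact_succ (m : ℕ) : qfact q (m+1) = qfact q m * qint q (m+1) :=
  Finset.prod_Icc_succ_top (by omega) _

lemma qint_add (hq : q ≠ 1) (a b : ℕ) : qint q (a+b) = qint q a + q^a * qint q b := by
  have : (1:ℝ) - q ≠ 0 := by intro h; apply hq; linarith
  unfold qint
  field_simp
  ring

lemma qint_one (hq : q ≠ 1) : qint q 1 = 1 := by
  unfold qint; rw [pow_one]
  exact div_self (by intro h; apply hq; linarith)

lemma qbinom_self (N : ℕ) : qbinom q N N = 1 ∨ qfact q N = 0 := by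
  rcases eq_or_ne (qfact q N) 0 with h | h
  · exact Or.inr h
  · left; unfold qbinom; rw [Nat.sub_self, qfact_zero, mul_one, div_self h]

-- Pascal A : C(N+1,k+1) = C(N,k+1) + q^(N-k) * C(N,k)  for k < N
lemma pascalA (hq0 : 0 < q) (hq1 : q < 1) {k N : ℕ} (h : k < N) :
    qbinom q (N+1) (k+1) = qbinom q N (k+1) + q^(N-k) * qbinom q N k := by
  obtain ⟨r, rfl⟩ : ∃ r, N = k+1+r := ⟨N-(k+1), by omega⟩
  have hq : q ≠ 1 := hq1.ne
  have e1 : qfact q (k+1+r+1) = qfact q (k+1+r) * qint q (k+1+r+1) := qfact_succ _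
  have e2 : qfact q (r+1) = qfact q r * qint q (r+1) := qfact_succ _
  have e3 : qfact q (k+1) = qfact q k * qint q (k+1) := qfact_succ _
  have key : qint q (k+1+r+1) = qint q (r+1) + q^(r+1) * qint q (k+1) := by
    rw [show k+1+r+1 = (r+1)+(k+1) by ring, qint_add hq]
  unfold qbinom
  rw [show k+1+r+1-(k+1) = r+1 by omega, show k+1+r-(k+1) = r by omega,
    show k+1+r-k = r+1 by omega, e1, e2, e3, key]
  have h1 : qfact q k ≠ 0 := (qfact_pos hq0 hq1 _).ne'
  have h2 : qfact q r ≠ 0 := (qfact_pos hq0 hq1 _).ne'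
  have h3 : qint q (k+1) ≠ 0 := (qint_pos hq0 hq1 (by omega)).ne'
  have h4 : qint q (r+1) ≠ 0 := (qint_pos hq0 hq1 (by omega)).ne'
  field_simp

-- Pascal B : C(N+1,k+1) = q^(k+1) * C(N,k+1) + C(N,k)  for k < N
lemma pascalB (hq0 : 0 < q) (hq1 : q < 1) {k N : ℕ} (h : k < N) :
    qbinom q (N+1) (k+1) = q^(k+1) * qbinom q N (k+1) + qbinom q N k := by
  obtain ⟨r, rfl⟩ : ∃ r, N = k+1+r := ⟨N-(k+1), by omega⟩
  have hq : q ≠ 1 := hq1.ne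
  have e1 : qfact q (k+1+r+1) = qfact q (k+1+r) * qint q (k+1+r+1) := qfact_succ _
  have e2 : qfact q (r+1) = qfact q r * qint q (r+1) := qfact_succ _
  have e3 : qfact q (k+1) = qfact q k * qint q (k+1) := qfact_succ _
  have key : qint q (k+1+r+1) = qint q (k+1) + q^(k+1) * qint q (r+1) := by
    rw [show k+1+r+1 = (k+1)+(r+1) by ring, qint_add hq]
  unfold qbinom
  rw [show k+1+r+1-(k+1) = r+1 by omega, show k+1+r-(k+1) = r by omega,
    show k+1+r-k = r+1 by omega, e1, e2, e3, key]
  have h1 : qfact q k ≠ 0 := (qfact_pos hq0 hq1 _).ne'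
  have h2 : qfact q r ≠ 0 := (qfact_pos hq0 hq1 _).ne'
  have h3 : qint q (k+1) ≠ 0 := (qint_pos hq0 hq1 (by omega)).ne'
  have h4 : qint q (r+1) ≠ 0 := (qint_pos hq0 hq1 (by omega)).ne'
  field_simp
  ring

-- ratio : [k+1] * C(N+1,k+1) = [N+1] * C(N,k)  for k ≤ N
lemma ratio (hq0 : 0 < q) (hq1 : q < 1) {k N : ℕ} (h : k ≤ N) :
    qint q (k+1) * qbinom q (N+1) (k+1) = qint q (N+1) * qbinom q N k := by
  obtain ⟨r, rfl⟩ : ∃ r, N = k+r := ⟨N-k, by omega⟩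
  have e1 : qfact q (k+r+1) = qfact q (k+r) * qint q (k+r+1) := qfact_succ _
  have e3 : qfact q (k+1) = qfact q k * qint q (k+1) := qfact_succ _
  unfold qbinom
  rw [show k+r+1-(k+1) = r by omega, show k+r-k = r by omega, e1, e3]
  have h1 : qfact q k ≠ 0 := (qfact_pos hq0 hq1 _).ne'
  have h2 : qfact q r ≠ 0 := (qfact_pos hq0 hq1 _).ne'
  have h3 : qint q (k+1) ≠ 0 := (qint_pos hq0 hq1 (by omega)).ne'
  field_simp

lemma qbinom_zero' (hq0 : 0 < q) (hq1 : q < 1) (N : ℕ) : qbinom q N 0 = 1 := by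
  unfold qbinom
  rw [Nat.sub_zero, qfact_zero, one_mul, div_self (qfact_pos hq0 hq1 N).ne']

lemma qbinom_self' (hq0 : 0 < q) (hq1 : q < 1) (N : ℕ) : qbinom q N N = 1 := by
  unfold qbinom
  rw [Nat.sub_self, qfact_zero, mul_one, div_self (qfact_pos hq0 hq1 N).ne']

lemma tri (k : ℕ) : (k+1)*(k+1+1)/2 = k*(k+1)/2 + (k+1) := by
  obtain ⟨a, ha⟩ := Nat.even_mul_succ_self k
  obtain ⟨b, hb⟩ := Nat.even_mul_succ_self (k+1)
  have hc : (k+1)*(k+1+1) = k*(k+1) + 2*(k+1) := by ring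
  omega

lemma Tlemma (hq0 : 0 < q) (hq1 : q < 1) (N : ℕ) :
    ∑ k ∈ Finset.range (N+1), (-1:ℝ)^k * q^(k*(k+1)/2) * qbinom q (N+1) (k+1) = 1 := by
  set g : ℕ → ℝ := fun k => (-1:ℝ)^k * q^(k*(k+1)/2) * qbinom q N k with hg
  rw [Finset.sum_range_succ]
  have step : ∀ k ∈ Finset.range N, (-1:ℝ)^k * q^(k*(k+1)/2) * qbinom q (N+1) (k+1)
      = g k - g (k+1) := by
    intro k hk
    rw [pascalB hq0 hq1 (Finset.mem_range.mp hk)]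
    simp only [hg]
    have hpow : q^(k*(k+1)/2) * q^(k+1) = q^((k+1)*(k+1+1)/2) := by
      rw [← pow_add]; congr 1; rw [tri]
    have hsg : ((-1:ℝ))^(k+1) = -(-1:ℝ)^k := by rw [pow_succ]; ring
    rw [hsg, ← hpow]
    ring
  rw [Finset.sum_congr rfl step, Finset.sum_range_sub' g]
  have hgN : g N = (-1:ℝ)^N * q^(N*(N+1)/2) := by
    simp only [hg, qbinom_self' hq0 hq1 N, mul_one]
  have hg0 : g 0 = 1 := by simp [hg, qbinom_zero' hq0 hq1 N]
  rw [qbinom_self' hq0 hq1 (N+1), hg0, hgN, mul_one]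
  ring

theorem vanHamme_q_euler (q : ℝ) (hq0 : 0 < q) (hq1 : q < 1) (N : ℕ) (hN : 0 < N) :
    ∑ m ∈ Finset.Icc 1 N,
        (-1 : ℝ) ^ (m - 1) * q ^ (m * (m + 1) / 2) / qint q m * qbinom q N m =
      ∑ n ∈ Finset.Icc 1 N, q ^ n / qint q n := by
  induction N, hN using Nat.le_induction with
  | base =>
    simp only [Finset.Icc_self, Finset.sum_singleton]
    rw [qbinom_self' hq0 hq1, qint_one hq1.ne]
    norm_num
  | succ N hN ih =>
    rw [Finset.sum_Icc_succ_top (by omega : 1 ≤ N+1),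
        Finset.sum_Icc_succ_top (by omega : 1 ≤ N+1), ← ih]
    have split : ∀ m ∈ Finset.Icc 1 N,
        (-1:ℝ)^(m-1) * q^(m*(m+1)/2) / qint q m * qbinom q (N+1) m
        = (-1:ℝ)^(m-1) * q^(m*(m+1)/2) / qint q m * qbinom q N m
          + (-1:ℝ)^(m-1) * q^(m*(m+1)/2) / qint q m * (q^(N+1-m) * qbinom q N (m-1)) := by
      intro m hm
      obtain ⟨hm1, hm2⟩ := Finset.mem_Icc.mp hm
      obtain ⟨k, rfl⟩ : ∃ k, m = k+1 := ⟨m-1, by omega⟩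
      rw [show k+1-1 = k by omega, show N+1-(k+1) = N-k by omega,
        pascalA hq0 hq1 (by omega)]
      ring
    rw [Finset.sum_congr rfl split, Finset.sum_add_distrib, add_assoc]
    congr 1
    have last : (-1:ℝ)^(N+1-1) * q^((N+1)*(N+1+1)/2) / qint q (N+1) * qbinom q (N+1) (N+1)
        = (-1:ℝ)^(N+1-1) * q^((N+1)*(N+1+1)/2) / qint q (N+1)
            * (q^(N+1-(N+1)) * qbinom q N (N+1-1)) := by
      rw [qbinom_self' hq0 hq1, show N+1-(N+1) = 0 by omega, show N+1-1 = N by omega,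
        pow_zero, one_mul, qbinom_self' hq0 hq1]
    have top : ∑ m ∈ Finset.Icc 1 (N+1),
        (-1:ℝ)^(m-1) * q^(m*(m+1)/2) / qint q m * (q^(N+1-m) * qbinom q N (m-1))
        = (∑ m ∈ Finset.Icc 1 N,
            (-1:ℝ)^(m-1) * q^(m*(m+1)/2) / qint q m * (q^(N+1-m) * qbinom q N (m-1)))
          + (-1:ℝ)^(N+1-1) * q^((N+1)*(N+1+1)/2) / qint q (N+1)
              * (q^(N+1-(N+1)) * qbinom q N (N+1-1)) :=
      Finset.sum_Icc_succ_top (by omega) _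
    rw [last, ← top, show Finset.Icc 1 (N+1) = Finset.Ico 1 (N+2) by
      exact (Finset.Ico_add_one_right_eq_Icc 1 (N+1)).symm, Finset.sum_Ico_eq_sum_range]
    have per : ∀ k ∈ Finset.range (N+2-1),
        (-1:ℝ)^((1+k)-1) * q^((1+k)*((1+k)+1)/2) / qint q (1+k)
            * (q^(N+1-(1+k)) * qbinom q N ((1+k)-1))
        = q^(N+1)/qint q (N+1) * ((-1:ℝ)^k * q^(k*(k+1)/2) * qbinom q (N+1) (k+1)) := by
      intro k hk
      have hk' : k ≤ N := by
        have := Finset.mem_range.mp hk; omega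
      rw [show (1:ℕ)+k-1 = k by omega, show N+1-(1+k) = N-k by omega,
        show (1:ℕ)+k = k+1 by omega]
      have h1 : qint q (k+1) ≠ 0 := (qint_pos hq0 hq1 (by omega)).ne'
      have h2 : qint q (N+1) ≠ 0 := (qint_pos hq0 hq1 (by omega)).ne'
      have hrat := ratio hq0 hq1 hk'
      have hpow : q^((k+1)*((k+1)+1)/2) * q^(N-k) = q^(N+1) * q^(k*(k+1)/2) := by
        rw [← pow_add, ← pow_add]; congr 1; have := tri k; omega
      rw [div_mul_eq_mul_div, div_mul_eq_mul_div, div_eq_div_iff h1 h2]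
      linear_combination ((-1:ℝ)^k * qbinom q N k * qint q (N+1)) * hpow
        - ((-1:ℝ)^k * q^(N+1) * q^(k*(k+1)/2)) * hrat
    rw [Finset.sum_congr rfl per, ← Finset.mul_sum,
      show N+2-1 = N+1 by omega, Tlemma hq0 hq1 N, mul_one]
end

section
/- (Hoffman's duality identity) Let N be a positive integer, k = (k_1,...,k_r) an index (tuple of positive integers) and k^∨ = (l_1,...,l_s) its Hoffman dual. Then ∑_{1 ≤ m_1 ≤ ... ≤ m_r ≤ N} (-1)^{m_r - 1} C(N, m_r) / (m_1^{k_1} ··· m_r^{k_r}) = ∑_{1 ≤ n_1 ≤ ... ≤ n_s ≤ N} 1/(n_1^{l_1} ··· n_s^{l_s}). -/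
/-- Weakly increasing tuples `1 ≤ m 0 ≤ ⋯ ≤ m (r-1) ≤ N`. -/
def wchains (r N : ℕ) : Finset (Fin r → ℕ) :=
  (Fintype.piFinset fun _ => Finset.Icc 1 N).filter fun m => ∀ i j : Fin r, i ≤ j → m i ≤ m j

/-- The set of partial sums `k_1, k_1+k_2, …, k_1+⋯+k_{r-1}` of a list. -/
def psums (k : List ℕ) : Finset ℕ :=
  ((List.range (k.length - 1)).map (fun j => (k.take (j + 1)).sum)).toFinset

/-- `l` is the Hoffman dual of the index `k`. -/
def IsHoffmanDual (k l : List ℕ) : Prop :=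
  k ≠ [] ∧ l ≠ [] ∧ (∀ x ∈ k, 0 < x) ∧ (∀ x ∈ l, 0 < x) ∧ k.sum = l.sum ∧
    psums l = Finset.Icc 1 (k.sum - 1) \ psums k

/-- Star multiple harmonic sum `ζ_N^⋆(k)`. -/
def zetaStar (N : ℕ) (k : List ℕ) : ℚ :=
  ∑ m ∈ wchains k.length N, ∏ i : Fin k.length, (1 : ℚ) / (m i : ℚ) ^ k.get i

/-- The sum `H_N^⋆(k)`. -/
def Hstar (N : ℕ) (k : List ℕ) : ℚ :=
  if h : 0 < k.length then
    ∑ m ∈ wchains k.length N,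
      (-1 : ℚ) ^ (m ⟨k.length - 1, by omega⟩ - 1) * (N.choose (m ⟨k.length - 1, by omega⟩)) *
        ∏ i : Fin k.length, (1 : ℚ) / (m i : ℚ) ^ k.get i
  else 1

open Finset


/-- Hockey stick: `∑_{n=1}^{M} C(n-1, m-1) = C(M, m)` for `m ≥ 1`. -/
lemma hockey (m : ℕ) (hm : 1 ≤ m) (M : ℕ) :
    ∑ n ∈ Icc 1 M, (n - 1).choose (m - 1) = M.choose m := by
  induction M with
  | zero => simp [Nat.choose_eq_zero_of_lt hm]
  | succ M ih =>
    rw [Finset.sum_Icc_succ_top (by omega), ih]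
    obtain ⟨m', rfl⟩ : ∃ m', m = m' + 1 := ⟨m - 1, by omega⟩
    simp [Nat.choose_succ_succ, Nat.add_comm]

lemma hockeyQ (m : ℕ) (hm : 1 ≤ m) (M : ℕ) :
    ∑ n ∈ Icc 1 M, ((n - 1).choose (m - 1) : ℚ) = (M.choose m : ℚ) := by
  exact_mod_cast congrArg (Nat.cast : ℕ → ℚ) (hockey m hm M)

/-- `C(M,m)/M = C(M-1,m-1)/m` in `ℚ` for `M, m ≥ 1`. -/
lemma choose_div_eq (M m : ℕ) (hM : 1 ≤ M) (hm : 1 ≤ m) :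
    (M.choose m : ℚ) / M = ((M - 1).choose (m - 1) : ℚ) / m := by
  have key : M * ((M - 1).choose (m - 1)) = M.choose m * m := by
    have := Nat.add_one_mul_choose_eq (M - 1) (m - 1)
    have h1 : M - 1 + 1 = M := by omega
    have h2 : m - 1 + 1 = m := by omega
    rwa [h1, h2] at this
  have keyQ : (M : ℚ) * ((M - 1).choose (m - 1) : ℚ) = (M.choose m : ℚ) * m := by
    exact_mod_cast congrArg (Nat.cast : ℕ → ℚ) key
  have hM0 : (M : ℚ) ≠ 0 := by positivity
  have hm0 : (m : ℚ) ≠ 0 := by positivity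
  rw [div_eq_div_iff hM0 hm0]
  linarith [keyQ]

/-- Alternating tail sum: `∑_{M=m}^{Nn} (-1)^{M-1} C(n,M) = (-1)^{m-1} C(n-1,m-1)`. -/
lemma alt_tail (n m Nn : ℕ) (hm : 1 ≤ m) (hn : 1 ≤ n) (hnN : n ≤ Nn) (hmN : m ≤ Nn) :
    ∑ M ∈ Icc m Nn, (-1 : ℚ) ^ (M - 1) * (n.choose M : ℚ)
      = (-1 : ℚ) ^ (m - 1) * ((n - 1).choose (m - 1) : ℚ) := by
  set g : ℕ → ℚ := fun M => (-1 : ℚ) ^ (M - 1) * ((n - 1).choose (M - 1) : ℚ) with hg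
  have step : ∀ M, 1 ≤ M → (-1 : ℚ) ^ (M - 1) * (n.choose M : ℚ) = g M - g (M + 1) := by
    intro M hM
    obtain ⟨M', rfl⟩ : ∃ M', M = M' + 1 := ⟨M - 1, by omega⟩
    obtain ⟨n', rfl⟩ : ∃ n', n = n' + 1 := ⟨n - 1, by omega⟩
    simp only [hg, Nat.add_sub_cancel, Nat.choose_succ_succ n' M']
    push_cast
    ring
  have hsum : ∑ M ∈ Icc m Nn, (-1 : ℚ) ^ (M - 1) * (n.choose M : ℚ)
      = ∑ M ∈ Icc m Nn, (g M - g (M + 1)) := by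
    apply Finset.sum_congr rfl
    intro M hM
    rw [Finset.mem_Icc] at hM
    exact step M (by omega)
  rw [hsum, ← Finset.Ico_add_one_right_eq_Icc, Finset.sum_Ico_eq_sum_range]
  have heq : ∀ i, g (m + i) - g (m + i + 1)
      = (fun j => g (m + j)) i - (fun j => g (m + j)) (i + 1) := by
    intro i; simp [Nat.add_assoc]
  simp only [heq]
  rw [Finset.sum_range_sub' (fun j => g (m + j))]
  have h1 : m + (Nn + 1 - m) = Nn + 1 := by omega
  rw [h1]
  have h2 : g (Nn + 1) = 0 := by
    simp only [hg, Nat.add_sub_cancel]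
    rw [Nat.choose_eq_zero_of_lt (by omega)]
    simp
  rw [h2, hg]
  ring

/-- The binomial-transform relation between the two weight functions. -/
def BRel (N : ℕ) (φ ψ : ℕ → ℚ) : Prop :=
  ∀ m, 1 ≤ m → m ≤ N →
    φ m = (-1 : ℚ) ^ (m - 1) * ∑ n ∈ Icc 1 N, ((n - 1).choose (m - 1) : ℚ) * ψ n

lemma Icc_swap (N : ℕ) (f : ℕ → ℕ → ℚ) :
    ∑ n ∈ Icc 1 N, ∑ M ∈ Icc n N, f n M = ∑ M ∈ Icc 1 N, ∑ n ∈ Icc 1 M, f n M := by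
  apply Finset.sum_comm'
  intro x y
  simp only [Finset.mem_Icc]
  omega

lemma brel_init (N : ℕ) :
    BRel N (fun m => (-1 : ℚ) ^ (m - 1) * (N.choose m : ℚ)) (fun _ => 1) := by
  intro m hm1 hmN
  simp only [mul_one]
  rw [hockeyQ m hm1 N]

lemma brel_D {N : ℕ} {φ ψ : ℕ → ℚ} (h : BRel N φ ψ) :
    BRel N (fun m => φ m / m) (fun n => ∑ M ∈ Icc n N, ψ M / M) := by
  intro m hm1 hmN
  simp only []
  have swap : ∑ n ∈ Icc 1 N, ((n - 1).choose (m - 1) : ℚ) * ∑ M ∈ Icc n N, ψ M / M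
      = ∑ M ∈ Icc 1 N, ∑ n ∈ Icc 1 M, ((n - 1).choose (m - 1) : ℚ) * (ψ M / M) := by
    rw [← Icc_swap N (fun n M => ((n - 1).choose (m - 1) : ℚ) * (ψ M / M))]
    exact Finset.sum_congr rfl fun n _ => Finset.mul_sum _ _ _
  rw [swap]
  have inner : ∀ M ∈ Icc 1 N,
      ∑ n ∈ Icc 1 M, ((n - 1).choose (m - 1) : ℚ) * (ψ M / M)
        = ((M - 1).choose (m - 1) : ℚ) * ψ M / m := by
    intro M hM
    rw [Finset.mem_Icc] at hM
    rw [← Finset.sum_mul, hockeyQ m hm1 M]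
    have h3 : (M.choose m : ℚ) * (ψ M / M) = ((M.choose m : ℚ) / M) * ψ M := by ring
    rw [h3, choose_div_eq M m hM.1 hm1]
    ring
  rw [Finset.sum_congr rfl inner]
  rw [← Finset.sum_div, h m hm1 hmN]
  ring

lemma brel_S {N : ℕ} {φ ψ : ℕ → ℚ} (h : BRel N φ ψ) :
    BRel N (fun m => ∑ M ∈ Icc m N, φ M / M) (fun n => ψ n / n) := by
  intro m hm1 hmN
  simp only []
  have expand : ∀ M ∈ Icc m N, φ M / M
      = ∑ n ∈ Icc 1 N, ((-1 : ℚ) ^ (M - 1) * (n.choose M : ℚ)) * (ψ n / n) := by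
    intro M hM
    rw [Finset.mem_Icc] at hM
    rw [h M (by omega) hM.2, Finset.mul_sum, Finset.sum_div]
    apply Finset.sum_congr rfl
    intro n hn
    rw [Finset.mem_Icc] at hn
    have h4 : (-1:ℚ)^(M-1) * (((n-1).choose (M-1) : ℚ) * ψ n) / M
        = (-1:ℚ)^(M-1) * ((((n-1).choose (M-1) : ℚ)) / M) * ψ n := by ring
    rw [h4, ← choose_div_eq n M hn.1 (by omega)]
    ring
  rw [Finset.sum_congr rfl expand, Finset.sum_comm, Finset.mul_sum]
  apply Finset.sum_congr rfl
  intro n hn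
  rw [Finset.mem_Icc] at hn
  rw [← Finset.sum_mul, alt_tail n m N hm1 hn.1 hn.2 hmN]
  ring

lemma brel_base {N : ℕ} {φ ψ : ℕ → ℚ} (h : BRel N φ ψ) :
    ∑ m ∈ Icc 1 N, φ m / m = ∑ n ∈ Icc 1 N, ψ n / n := by
  rcases Nat.eq_zero_or_pos N with hN | hN
  · subst hN; simp
  have expand : ∀ M ∈ Icc 1 N, φ M / M
      = ∑ n ∈ Icc 1 N, ((-1 : ℚ) ^ (M - 1) * (n.choose M : ℚ)) * (ψ n / n) := by
    intro M hM
    rw [Finset.mem_Icc] at hM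
    rw [h M hM.1 hM.2, Finset.mul_sum, Finset.sum_div]
    apply Finset.sum_congr rfl
    intro n hn
    rw [Finset.mem_Icc] at hn
    have h4 : (-1:ℚ)^(M-1) * (((n-1).choose (M-1) : ℚ) * ψ n) / M
        = (-1:ℚ)^(M-1) * ((((n-1).choose (M-1) : ℚ)) / M) * ψ n := by ring
    rw [h4, ← choose_div_eq n M hn.1 hM.1]
    ring
  rw [Finset.sum_congr rfl expand, Finset.sum_comm]
  apply Finset.sum_congr rfl
  intro n hn
  rw [Finset.mem_Icc] at hn
  rw [← Finset.sum_mul, alt_tail n 1 N le_rfl hn.1 hn.2 hN]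
  simp


lemma mem_wchains {r N : ℕ} {m : Fin r → ℕ} :
    m ∈ wchains r N ↔ (∀ i, 1 ≤ m i ∧ m i ≤ N) ∧ (∀ i j : Fin r, i ≤ j → m i ≤ m j) := by
  simp [wchains, Finset.mem_filter, Fintype.mem_piFinset, Finset.mem_Icc]

/-- Decomposition of `Fin (r+1)`. -/
lemma fin_dec {r : ℕ} (i : Fin (r + 1)) : i = Fin.last r ∨ ∃ i' : Fin r, i = Fin.castSucc i' :=
  Fin.lastCases (Or.inl rfl) (fun i' => Or.inr ⟨i', rfl⟩) i

/-- Peeling the top variable of a chain sum. -/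
lemma sum_wchains_succ (N r : ℕ) (hr : 0 < r) (F : (Fin (r + 1) → ℕ) → ℚ) :
    ∑ m ∈ wchains (r + 1) N, F m
      = ∑ m ∈ wchains r N, ∑ t ∈ Icc (m ⟨r - 1, by omega⟩) N, F (Fin.snoc m t) := by
  rw [← Finset.sum_sigma (wchains r N) (fun m => Icc (m ⟨r - 1, by omega⟩) N)
      (fun p => F (Fin.snoc p.1 p.2))]
  apply Finset.sum_nbij' (i := fun m => (⟨Fin.init m, m (Fin.last r)⟩ : Σ _ : Fin r → ℕ, ℕ))
    (j := fun p => Fin.snoc p.1 p.2)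
  · intro m hm
    rw [mem_wchains] at hm
    rw [Finset.mem_sigma]
    constructor
    · rw [mem_wchains]
      refine ⟨fun i => hm.1 i.castSucc, fun i j hij => hm.2 _ _ ?_⟩
      exact Fin.castSucc_le_castSucc_iff.mpr hij
    · rw [Finset.mem_Icc]
      constructor
      · show Fin.init m ⟨r - 1, by omega⟩ ≤ m (Fin.last r)
        exact hm.2 _ _ (Fin.le_last _)
      · exact (hm.1 _).2
  · intro p hp
    rw [Finset.mem_sigma] at hp
    obtain ⟨hp1, hp2⟩ := hp
    rw [mem_wchains] at hp1 ⊢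
    rw [Finset.mem_Icc] at hp2
    constructor
    · intro i
      rcases fin_dec i with rfl | ⟨i', rfl⟩
      · rw [Fin.snoc_last]
        exact ⟨le_trans (hp1.1 ⟨r - 1, by omega⟩).1 hp2.1, hp2.2⟩
      · rw [Fin.snoc_castSucc]
        exact hp1.1 i'
    · intro i j hij
      rcases fin_dec j with rfl | ⟨j', rfl⟩
      · rw [Fin.snoc_last]
        rcases fin_dec i with rfl | ⟨i', rfl⟩
        · rw [Fin.snoc_last]
        · rw [Fin.snoc_castSucc]
          exact le_trans (hp1.2 i' ⟨r - 1, by omega⟩ (by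
            rw [Fin.le_def]; simp; omega)) hp2.1
      · rcases fin_dec i with rfl | ⟨i', rfl⟩
        · exfalso
          rw [Fin.le_def] at hij
          simp at hij
          omega
        · rw [Fin.snoc_castSucc, Fin.snoc_castSucc]
          exact hp1.2 i' j' (by rwa [Fin.castSucc_le_castSucc_iff] at hij)
  · intro m _
    simp [Fin.snoc_init_self]
  · intro p _
    simp [Fin.init_snoc, Fin.snoc_last]
  · intro m _
    rw [Fin.snoc_init_self]

def wsum (N : ℕ) (f : ℕ → ℚ) (r : ℕ) (e : Fin r → ℕ) : ℚ :=
  if h : 0 < r then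
    ∑ m ∈ wchains r N,
      f (m ⟨r - 1, by omega⟩) * ∏ i : Fin r, (1 : ℚ) / (m i : ℚ) ^ e i
  else 1

lemma wsum_cast (N : ℕ) (f : ℕ → ℚ) {r r' : ℕ} (h : r = r') (e : Fin r → ℕ) :
    wsum N f r e = wsum N f r' (e ∘ Fin.cast h.symm) := by subst h; rfl

lemma wsum_one (N : ℕ) (f : ℕ → ℚ) (e : Fin 1 → ℕ) :
    wsum N f 1 e = ∑ t ∈ Icc 1 N, f t * ((1 : ℚ) / (t : ℚ) ^ e 0) := by
  rw [wsum, dif_pos one_pos]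
  apply Finset.sum_nbij' (i := fun m : Fin 1 → ℕ => m 0) (j := fun t => fun _ : Fin 1 => t)
  · intro m hm
    rw [mem_wchains] at hm
    rw [Finset.mem_Icc]
    exact hm.1 0
  · intro t ht
    rw [Finset.mem_Icc] at ht
    rw [mem_wchains]
    exact ⟨fun _ => ht, fun _ _ _ => le_rfl⟩
  · intro m _
    funext i
    rw [Subsingleton.elim i 0]
  · intro t _
    rfl
  · intro m _
    rw [Fin.prod_univ_one]
    rfl

lemma wsum_dec (N : ℕ) (f : ℕ → ℚ) (r : ℕ) (hr : 0 < r) (e e' : Fin r → ℕ)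
    (htop : e ⟨r - 1, by omega⟩ = e' ⟨r - 1, by omega⟩ + 1)
    (hrest : ∀ i : Fin r, i ≠ ⟨r - 1, by omega⟩ → e i = e' i) :
    wsum N f r e = wsum N (fun x => f x / x) r e' := by
  rw [wsum, wsum, dif_pos hr, dif_pos hr]
  apply Finset.sum_congr rfl
  intro m hm
  rw [mem_wchains] at hm
  set top : Fin r := ⟨r - 1, by omega⟩ with htopdef
  have hm0 : (m top : ℚ) ≠ 0 := by
    have := (hm.1 top).1; positivity
  rw [Finset.prod_eq_mul_prod_sdiff_singleton_of_mem (Finset.mem_univ top)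
      (fun i => (1 : ℚ) / (m i : ℚ) ^ e i),
    Finset.prod_eq_mul_prod_sdiff_singleton_of_mem (Finset.mem_univ top)
      (fun i => (1 : ℚ) / (m i : ℚ) ^ e' i)]
  have hP : ∏ x ∈ Finset.univ \ {top}, (1 : ℚ) / (m x : ℚ) ^ e x
      = ∏ x ∈ Finset.univ \ {top}, (1 : ℚ) / (m x : ℚ) ^ e' x := by
    apply Finset.prod_congr rfl
    intro i hi
    rw [Finset.mem_sdiff, Finset.mem_singleton] at hi
    rw [hrest i hi.2]
  rw [hP, htop, pow_succ]
  field_simp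

lemma wsum_fub (N : ℕ) (f : ℕ → ℚ) (r : ℕ) (hr : 0 < r) (e : Fin (r + 1) → ℕ)
    (he : e (Fin.last r) = 1) :
    wsum N f (r + 1) e
      = wsum N (fun b => ∑ t ∈ Icc b N, f t / t) r (fun i => e i.castSucc) := by
  rw [wsum, wsum, dif_pos (Nat.succ_pos r), dif_pos hr]
  have hlast : ∀ (h : r + 1 - 1 < r + 1), (⟨r + 1 - 1, h⟩ : Fin (r + 1)) = Fin.last r :=
    fun _ => rfl
  simp only [hlast]
  rw [sum_wchains_succ N r hr (fun m => f (m (Fin.last r)) * ∏ i : Fin (r + 1), (1 : ℚ) / (m i : ℚ) ^ e i)]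
  apply Finset.sum_congr rfl
  intro m hm
  rw [mem_wchains] at hm
  have inner : ∀ t ∈ Icc (m ⟨r - 1, by omega⟩) N,
      f (Fin.snoc (α := fun _ => ℕ) m t (Fin.last r))
          * ∏ i : Fin (r + 1), (1 : ℚ) / ((Fin.snoc (α := fun _ => ℕ) m t i : ℕ) : ℚ) ^ e i
        = (f t / t) * ∏ i : Fin r, (1 : ℚ) / (m i : ℚ) ^ e i.castSucc := by
    intro t ht
    rw [Finset.mem_Icc] at ht
    have ht0 : (t : ℚ) ≠ 0 := by
      have h1 : 1 ≤ t := le_trans (hm.1 _).1 ht.1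
      positivity
    rw [Fin.snoc_last, Fin.prod_univ_castSucc]
    simp only [Fin.snoc_castSucc, Fin.snoc_last, he, pow_one]
    field_simp
  rw [Finset.sum_congr rfl inner, ← Finset.sum_mul]

-- list level
def Wl (N : ℕ) (f : ℕ → ℚ) (k : List ℕ) : ℚ := wsum N f k.length k.get

lemma Wl_concat (N : ℕ) (f : ℕ → ℚ) (q : List ℕ) (x : ℕ) :
    Wl N f (q ++ [x]) = wsum N f (q.length + 1) (Fin.snoc q.get x) := by
  rw [Wl, wsum_cast N f (show (q ++ [x]).length = q.length + 1 by simp) ((q ++ [x]).get)]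
  congr 1
  funext i
  rcases fin_dec i with rfl | ⟨i', rfl⟩
  · rw [Fin.snoc_last]
    show (q ++ [x]).get (Fin.cast _ (Fin.last q.length)) = x
    rw [List.get_eq_getElem]
    exact List.getElem_concat_length (l := q) (a := x) rfl _
  · rw [Fin.snoc_castSucc]
    show (q ++ [x]).get (Fin.cast _ i'.castSucc) = q.get i'
    rw [List.get_eq_getElem, List.get_eq_getElem]
    exact List.getElem_append_left i'.isLt

lemma Wl_dec (N : ℕ) (f : ℕ → ℚ) (q : List ℕ) (x : ℕ) :
    Wl N f (q ++ [x + 1]) = Wl N (fun t => f t / t) (q ++ [x]) := by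
  rw [Wl_concat, Wl_concat]
  apply wsum_dec N f (q.length + 1) (Nat.succ_pos _)
  · show (Fin.snoc (α := fun _ => ℕ) q.get (x + 1) (Fin.last q.length) : ℕ)
        = (Fin.snoc (α := fun _ => ℕ) q.get x (Fin.last q.length) : ℕ) + 1
    rw [Fin.snoc_last, Fin.snoc_last]
  · intro i hi
    rcases fin_dec i with rfl | ⟨i', rfl⟩
    · exact absurd rfl hi
    · rw [Fin.snoc_castSucc, Fin.snoc_castSucc]

lemma Wl_fub (N : ℕ) (f : ℕ → ℚ) (q : List ℕ) (hq : q ≠ []) :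
    Wl N f (q ++ [1]) = Wl N (fun b => ∑ t ∈ Icc b N, f t / t) q := by
  rw [Wl_concat]
  rw [wsum_fub N f q.length (List.length_pos_iff.mpr hq) (Fin.snoc q.get 1) (Fin.snoc_last _ _)]
  rw [Wl]
  congr 1
  funext i
  rw [Fin.snoc_castSucc]

lemma Wl_single (N : ℕ) (f : ℕ → ℚ) (c : ℕ) :
    Wl N f [c] = ∑ t ∈ Icc 1 N, f t * ((1 : ℚ) / (t : ℚ) ^ c) :=
  wsum_one N f ([c].get)

-- psums lemmas and the main induction (to be appended; assumes defs from earlier parts)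

lemma psums_single (a : ℕ) : psums [a] = ∅ := by
  simp [psums]

lemma psums_concat {q : List ℕ} (hq : q ≠ []) (x : ℕ) :
    psums (q ++ [x]) = insert q.sum (psums q) := by
  have hn : 1 ≤ q.length := List.length_pos_iff.mpr hq
  ext y
  simp only [psums, List.mem_toFinset, List.mem_map, List.mem_range, Finset.mem_insert,
    List.length_append, List.length_singleton]
  constructor
  · rintro ⟨j, hj, rfl⟩
    have hj' : j < q.length := by omega
    rcases Nat.lt_or_ge j (q.length - 1) with hlt | hge
    · right
      exact ⟨j, by omega, by rw [List.take_append_of_le_length (by omega)]⟩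
    · left
      have hj1 : j + 1 = q.length := by omega
      rw [hj1, List.take_left]
  · rintro (rfl | ⟨j, hj, rfl⟩)
    · exact ⟨q.length - 1, by omega, by
        have : q.length - 1 + 1 = q.length := by omega
        rw [this, List.take_left]⟩
    · exact ⟨j, by omega, by rw [List.take_append_of_le_length (by omega)]⟩

lemma psums_concat_indep (q : List ℕ) (x y : ℕ) :
    psums (q ++ [x]) = psums (q ++ [y]) := by
  rcases eq_or_ne q [] with rfl | hq
  · simp [psums_single]
  · rw [psums_concat hq, psums_concat hq]

lemma psums_subset {q : List ℕ} (hq : q ≠ []) (hpos : ∀ x ∈ q, 0 < x) :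
    psums q ⊆ Finset.Icc 1 (q.sum - 1) := by
  intro y hy
  simp only [psums, List.mem_toFinset, List.mem_map, List.mem_range] at hy
  obtain ⟨j, hj, rfl⟩ := hy
  have hn : 1 ≤ q.length := List.length_pos_iff.mpr hq
  have htake : (q.take (j + 1)) ≠ [] := by
    have : (q.take (j + 1)).length = min (j + 1) q.length := List.length_take
    intro hcon
    rw [hcon] at this
    simp at this
    omega
  have hdrop : (q.drop (j + 1)) ≠ [] := by
    have : (q.drop (j + 1)).length = q.length - (j + 1) := List.length_drop
    intro hcon
    rw [hcon] at this
    simp at this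
    omega
  have h1 : 0 < (q.take (j + 1)).sum :=
    List.sum_pos _ (fun x hx => hpos x (List.mem_of_mem_take hx)) htake
  have h2 : 0 < (q.drop (j + 1)).sum :=
    List.sum_pos _ (fun x hx => hpos x (List.mem_of_mem_drop hx)) hdrop
  have h3 : (q.take (j + 1)).sum + (q.drop (j + 1)).sum = q.sum :=
    List.sum_take_add_sum_drop q (j + 1)
  rw [Finset.mem_Icc]
  omega

lemma mem_psums_concat_top {q : List ℕ} (a : ℕ) (ha : 0 < a) (hpos : ∀ x ∈ q, 0 < x) :
    (q.sum + a - 1) ∈ psums (q ++ [a]) ↔ (q ≠ [] ∧ a = 1) := by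
  rcases eq_or_ne q [] with rfl | hq
  · simp [psums_single]
  · have hqs : 0 < q.sum := List.sum_pos q hpos hq
    rw [psums_concat hq]
    simp only [Finset.mem_insert]
    constructor
    · rintro (h | h)
      · exact ⟨hq, by omega⟩
      · have := psums_subset hq hpos h
        rw [Finset.mem_Icc] at this
        omega
    · rintro ⟨-, rfl⟩
      left
      omega

lemma main_ind (N w : ℕ) : ∀ (k l : List ℕ) (φ ψ : ℕ → ℚ), k.sum = w → k ≠ [] → l ≠ [] →
    (∀ x ∈ k, 0 < x) → (∀ x ∈ l, 0 < x) → k.sum = l.sum →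
    psums l = Finset.Icc 1 (k.sum - 1) \ psums k →
    BRel N φ ψ → Wl N φ k = Wl N ψ l := by
  induction w using Nat.strong_induction_on with
  | _ w IH =>
  intro k l φ ψ hw hk hl hkpos hlpos hsum hdual hrel
  obtain ⟨q, a, rfl⟩ : ∃ q a, k = q ++ [a] := by
    rcases List.eq_nil_or_concat k with rfl | ⟨q, a, h⟩
    · exact absurd rfl hk
    · exact ⟨q, a, by rw [h, List.concat_eq_append]⟩
  obtain ⟨p, b, rfl⟩ : ∃ p b, l = p ++ [b] := by
    rcases List.eq_nil_or_concat l with rfl | ⟨p, b, h⟩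
    · exact absurd rfl hl
    · exact ⟨p, b, by rw [h, List.concat_eq_append]⟩
  have ha : 0 < a := hkpos a (by simp)
  have hb : 0 < b := hlpos b (by simp)
  have hqpos : ∀ x ∈ q, 0 < x := fun x hx => hkpos x (by simp [hx])
  have hppos : ∀ x ∈ p, 0 < x := fun x hx => hlpos x (by simp [hx])
  have hks : (q ++ [a]).sum = q.sum + a := by simp
  have hls : (p ++ [b]).sum = p.sum + b := by simp
  rcases Nat.lt_or_ge w 2 with hw1 | hw2
  · -- base case: w = 1, k = [1], l = [1]
    have hq0 : q = [] := by
      by_contra hq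
      have := List.sum_pos q hqpos hq
      omega
    have hp0 : p = [] := by
      by_contra hp
      have := List.sum_pos p hppos hp
      omega
    subst hq0; subst hp0
    simp only [List.nil_append] at hw hsum ⊢
    simp only [List.sum_cons, List.sum_nil, Nat.add_zero] at hw hsum
    have ha1 : a = 1 := by omega
    have hb1 : b = 1 := by omega
    subst ha1; subst hb1
    rw [Wl_single, Wl_single]
    have h1 : ∀ (χ : ℕ → ℚ), ∑ t ∈ Finset.Icc 1 N, χ t * ((1:ℚ)/(t:ℚ)^1)
        = ∑ t ∈ Finset.Icc 1 N, χ t / t := by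
      intro χ
      apply Finset.sum_congr rfl
      intro t _
      rw [pow_one, mul_one_div]
    rw [h1, h1]
    exact brel_base hrel
  · -- inductive step
    have hw1' : 1 ≤ w - 1 := by omega
    have hwk : (w - 1) ∈ psums (q ++ [a]) ↔ (q ≠ [] ∧ a = 1) := by
      have : w - 1 = q.sum + a - 1 := by omega
      rw [this]
      exact mem_psums_concat_top a ha hqpos
    have hwl : (w - 1) ∈ psums (p ++ [b]) ↔ (p ≠ [] ∧ b = 1) := by
      have : w - 1 = p.sum + b - 1 := by rw [hsum, hls] at hw; omega
      rw [this]
      exact mem_psums_concat_top b hb hppos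
    have hiff : (p ≠ [] ∧ b = 1) ↔ ¬(q ≠ [] ∧ a = 1) := by
      rw [← hwk, ← hwl, hdual, Finset.mem_sdiff, Finset.mem_Icc, hw]
      constructor
      · rintro ⟨-, h⟩
        exact h
      · intro h
        exact ⟨⟨by omega, by omega⟩, h⟩
    by_cases hA : a = 1
    · -- case B : a = 1, so q ≠ [], b ≥ 2
      subst hA
      have hq : q ≠ [] := by
        rintro rfl
        simp at hw
        omega
      have hb2 : 2 ≤ b := by
        rcases Nat.lt_or_ge b 2 with h' | h'
        · exfalso
          have hb1 : b = 1 := by omega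
          have hp : p ≠ [] := by
            rintro rfl
            simp [hb1] at hsum hw
            omega
          exact (hiff.mp ⟨hp, hb1⟩) ⟨hq, rfl⟩
        · exact h'
      obtain ⟨b', rfl⟩ : ∃ b', b = b' + 1 := ⟨b - 1, by omega⟩
      have hb' : 1 ≤ b' := by omega
      rw [Wl_fub N φ q hq, Wl_dec N ψ p b']
      have hqsum : q.sum = w - 1 := by omega
      apply IH (w - 1) (by omega) q (p ++ [b']) _ _ hqsum hq (by simp)
        hqpos (fun x hx => by
          simp only [List.mem_append, List.mem_singleton] at hx
          rcases hx with hx | rfl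
          · exact hppos x hx
          · omega)
        (by simp; omega)
        ?_ (brel_S hrel)
      -- dual condition
      rw [psums_concat_indep p b' (b' + 1), hdual, hks, psums_concat hq, hqsum]
      ext y
      simp only [Finset.mem_sdiff, Finset.mem_Icc, Finset.mem_insert]
      by_cases hy : y ∈ psums q <;> simp [hy] <;> omega
    · -- case A : a ≥ 2, so p ≠ [], b = 1
      have ha2 : 2 ≤ a := by omega
      have hpb : p ≠ [] ∧ b = 1 := hiff.mpr (fun h => hA h.2)
      obtain ⟨hp, rfl⟩ := hpb
      obtain ⟨a', rfl⟩ : ∃ a', a = a' + 1 := ⟨a - 1, by omega⟩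
      have ha' : 1 ≤ a' := by omega
      rw [Wl_dec N φ q a', Wl_fub N ψ p hp]
      have hpsum : p.sum = w - 1 := by rw [hsum, hls] at hw; omega
      have hknot : (w - 1) ∉ psums (q ++ [a' + 1]) := fun h => hA (hwk.mp h).2
      apply IH (w - 1) (by omega) (q ++ [a']) p _ _ (by simp; omega) (by simp) hp
        (fun x hx => by
          simp only [List.mem_append, List.mem_singleton] at hx
          rcases hx with hx | rfl
          · exact hqpos x hx
          · omega)
        hppos (by simp; omega)
        ?_ (brel_D hrel)
      -- dual condition
      have hpd : psums (p ++ [1]) = insert (w - 1) (psums p) := by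
        rw [psums_concat hp, hpsum]
      rw [hpd] at hdual
      have hpsub : psums p ⊆ Finset.Icc 1 (w - 2) := by
        have := psums_subset hp hppos
        rw [hpsum] at this
        intro y hy
        have h2 := this hy
        rw [Finset.mem_Icc] at h2 ⊢
        omega
      rw [psums_concat_indep q a' (a' + 1)]
      ext y
      constructor
      · intro hy
        have h1 : y ∈ insert (w - 1) (psums p) := Finset.mem_insert_of_mem hy
        rw [hdual, Finset.mem_sdiff, Finset.mem_Icc, hks] at h1
        have h2 := hpsub hy
        rw [Finset.mem_Icc] at h2
        rw [Finset.mem_sdiff, Finset.mem_Icc]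
        constructor
        · constructor
          · omega
          · simp; omega
        · exact h1.2
      · intro hy
        rw [Finset.mem_sdiff, Finset.mem_Icc] at hy
        have h1 : y ∈ insert (w - 1) (psums p) := by
          rw [hdual, Finset.mem_sdiff, Finset.mem_Icc, hks]
          refine ⟨⟨hy.1.1, by simp at hy ⊢; omega⟩, hy.2⟩
        rw [Finset.mem_insert] at h1
        rcases h1 with rfl | h1
        · exfalso
          have := hy.1.2
          simp at this
          omega
        · exact h1


theorem hoffman_duality (N : ℕ) (hN : 0 < N) (k l : List ℕ) (h : IsHoffmanDual k l) :
    Hstar N k = zetaStar N l := by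
  obtain ⟨hk, hl, hkpos, hlpos, hsum, hdual⟩ := h
  have h1 : Hstar N k = Wl N (fun x => (-1 : ℚ) ^ (x - 1) * (N.choose x : ℚ)) k := rfl
  have h2 : zetaStar N l = Wl N (fun _ => (1 : ℚ)) l := by
    rw [zetaStar, Wl, wsum, dif_pos (List.length_pos_iff.mpr hl)]
    exact Finset.sum_congr rfl fun m _ => (one_mul _).symm
  rw [h1, h2]
  exact main_ind N k.sum k l _ _ rfl hk hl hkpos hlpos hsum hdual (brel_init N)
end

section
/- For any odd prime p and any positive integer m with m < p, the congruence (-1)^{m-1} C(p-1, m) ≡ -1 - ∑_{m ≤ n ≤ p-1} p/n + p/m (mod p²) holds, where the fractions p/n are interpreted via inverses modulo p². -/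
open Finset

lemma prod_one_sub_collapse {R : Type*} [CommRing R] (c : R) (hc : c * c = 0)
    (f : ℕ → R) (s : Finset ℕ) :
    ∏ k ∈ s, (1 - c * f k) = 1 - c * ∑ k ∈ s, f k := by
  classical
  induction s using Finset.induction with
  | empty => simp
  | @insert a s h ih =>
    rw [Finset.prod_insert h, ih, Finset.sum_insert h]
    linear_combination (f a * ∑ x ∈ s, f x) * hc

theorem binom_congruence_mod_p_sq (p : ℕ) (hp : p.Prime) (hp2 : p ≠ 2)
    (m : ℕ) (hm : 0 < m) (hmp : m < p) :
    ((-1 : ZMod (p ^ 2)) ^ (m - 1) * ((p - 1).choose m : ZMod (p ^ 2))) =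
      -1 - (∑ n ∈ Finset.Icc m (p - 1), (p : ZMod (p ^ 2)) * (n : ZMod (p ^ 2))⁻¹) +
        (p : ZMod (p ^ 2)) * (m : ZMod (p ^ 2))⁻¹ := by
  have hp3 : 3 ≤ p := by
    have := hp.two_le; omega
  have hpsq : (p : ZMod (p ^ 2)) * (p : ZMod (p ^ 2)) = 0 := by
    rw [← Nat.cast_mul, ← pow_two]; exact ZMod.natCast_self _
  have hinv : ∀ k : ℕ, 0 < k → k < p →
      (k : ZMod (p ^ 2)) * (k : ZMod (p ^ 2))⁻¹ = 1 := by
    intro k hk hkp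
    apply ZMod.coe_mul_inv_eq_one
    exact (Nat.Coprime.pow_right 2
      ((Nat.coprime_comm).mp ((hp.coprime_iff_not_dvd).mpr
        (fun h => absurd (Nat.le_of_dvd hk h) (not_le.mpr hkp)))))
  -- ℕ identity
  have hnat : (p - 1).choose m * m.factorial = ∏ i ∈ range m, (p - 1 - i) := by
    rw [← Nat.descFactorial_eq_prod_range, Nat.descFactorial_eq_factorial_mul_choose,
      mul_comm]
  -- cast to ZMod (p^2)
  have hcast : ((p - 1).choose m : ZMod (p ^ 2)) * (m.factorial : ZMod (p ^ 2)) =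
      ∏ i ∈ range m, ((p : ZMod (p ^ 2)) - ((i + 1 : ℕ) : ZMod (p ^ 2))) := by
    rw [← Nat.cast_mul, hnat, Nat.cast_prod]
    apply Finset.prod_congr rfl
    intro i hi
    have hi' : i + 1 ≤ p := by
      have := Finset.mem_range.mp hi; omega
    have : p - 1 - i = p - (i + 1) := by omega
    rw [this, Nat.cast_sub hi']
  -- factor transform
  have hfac : ∀ i ∈ range m,
      (p : ZMod (p ^ 2)) - ((i + 1 : ℕ) : ZMod (p ^ 2)) =
        (-1) * ((i + 1 : ℕ) : ZMod (p ^ 2)) *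
          (1 - (p : ZMod (p ^ 2)) * ((i + 1 : ℕ) : ZMod (p ^ 2))⁻¹) := by
    intro i hi
    have hi' : i + 1 < p := by
      have := Finset.mem_range.mp hi; omega
    have h := hinv (i + 1) (Nat.succ_pos i) hi'
    linear_combination (-(p : ZMod (p ^ 2))) * h
  have hprod : ((p - 1).choose m : ZMod (p ^ 2)) * (m.factorial : ZMod (p ^ 2)) =
      (-1 : ZMod (p ^ 2)) ^ m * (m.factorial : ZMod (p ^ 2)) *
        (1 - (p : ZMod (p ^ 2)) * ∑ i ∈ range m, ((i + 1 : ℕ) : ZMod (p ^ 2))⁻¹) := by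
    rw [hcast, Finset.prod_congr rfl hfac, Finset.prod_mul_distrib,
      Finset.prod_mul_distrib, Finset.prod_const, Finset.card_range,
      prod_one_sub_collapse _ hpsq, ← Nat.cast_prod,
      Finset.prod_range_add_one_eq_factorial]
  -- m! is a unit
  have hfactinv : (m.factorial : ZMod (p ^ 2)) * (m.factorial : ZMod (p ^ 2))⁻¹ = 1 := by
    apply ZMod.coe_mul_inv_eq_one
    apply Nat.Coprime.pow_right
    exact (Nat.coprime_comm).mp ((hp.coprime_iff_not_dvd).mpr
      (fun h => absurd ((Nat.Prime.dvd_factorial hp).mp h) (not_le.mpr hmp)))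
  set S₁ : ZMod (p ^ 2) := ∑ i ∈ range m, ((i + 1 : ℕ) : ZMod (p ^ 2))⁻¹ with hS₁
  have hchoose : ((p - 1).choose m : ZMod (p ^ 2)) =
      (-1 : ZMod (p ^ 2)) ^ m * (1 - (p : ZMod (p ^ 2)) * S₁) := by
    linear_combination ((m.factorial : ZMod (p ^ 2))⁻¹) * hprod +
      ((-1 : ZMod (p ^ 2)) ^ m * (1 - (p : ZMod (p ^ 2)) * S₁) -
        ((p - 1).choose m : ZMod (p ^ 2))) * hfactinv
  -- sign
  obtain ⟨m', rfl⟩ : ∃ m', m = m' + 1 := ⟨m - 1, by omega⟩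
  have hsign : ((-1 : ZMod (p ^ 2)) ^ (m' + 1 - 1)) * (-1 : ZMod (p ^ 2)) ^ (m' + 1) = -1 := by
    have : ((-1 : ZMod (p ^ 2)) ^ m') * (-1 : ZMod (p ^ 2)) ^ m' = 1 := by
      rw [← pow_add, ← two_mul, pow_mul]; simp
    simp only [Nat.add_sub_cancel, pow_succ]
    linear_combination (-1 : ZMod (p ^ 2)) * this
  set M := m' + 1 with hM
  -- the pairing sum
  set g : ℕ → ZMod (p ^ 2) := fun n => (p : ZMod (p ^ 2)) * (n : ZMod (p ^ 2))⁻¹ with hg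
  have hzero : ∑ n ∈ Finset.Icc 1 (p - 1), g n = 0 := by
    apply Finset.sum_involution (fun a _ => p - a)
    · intro a ha
      simp only [Finset.mem_Icc] at ha
      have ha1 : 0 < a := by omega
      have ha2 : a < p := by omega
      have hb1 : 0 < p - a := by omega
      have hb2 : p - a < p := by omega
      have hA := hinv a ha1 ha2
      have hB := hinv (p - a) hb1 hb2
      have hab : ((a : ZMod (p ^ 2)) + ((p - a : ℕ) : ZMod (p ^ 2))) = (p : ZMod (p ^ 2)) := by
        rw [Nat.cast_sub (le_of_lt ha2)]; ring
      simp only [hg]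
      linear_combination ((p : ZMod (p ^ 2)) * (a : ZMod (p ^ 2))⁻¹ *
          ((p - a : ℕ) : ZMod (p ^ 2))⁻¹) * hab +
        ((a : ZMod (p ^ 2))⁻¹ * ((p - a : ℕ) : ZMod (p ^ 2))⁻¹) * hpsq -
        ((p : ZMod (p ^ 2)) * (a : ZMod (p ^ 2))⁻¹) * hB -
        ((p : ZMod (p ^ 2)) * ((p - a : ℕ) : ZMod (p ^ 2))⁻¹) * hA
    · intro a ha _
      simp only [Finset.mem_Icc] at ha
      obtain ⟨k, hk⟩ := hp.odd_of_ne_two hp2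
      omega
    · intro a ha
      simp only [Finset.mem_Icc] at ha ⊢
      omega
    · intro a ha
      simp only [Finset.mem_Icc] at ha
      omega
  have hsplit : (∑ n ∈ Finset.Icc 1 M, g n) + ∑ n ∈ Finset.Icc (M + 1) (p - 1), g n =
      ∑ n ∈ Finset.Icc 1 (p - 1), g n := by
    have e1 : ∀ b : ℕ, Finset.Icc 1 b = Finset.Ioc 0 b := by
      intro b; ext x; simp only [Finset.mem_Icc, Finset.mem_Ioc]; omega
    have e2 : Finset.Icc (M + 1) (p - 1) = Finset.Ioc M (p - 1) := by
      ext x; simp only [Finset.mem_Icc, Finset.mem_Ioc]; omega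
    rw [e1, e1, e2]
    exact Finset.sum_Ioc_consecutive _ (Nat.zero_le M) (by omega)
  have hS₁g : (p : ZMod (p ^ 2)) * S₁ = ∑ n ∈ Finset.Icc 1 M, g n := by
    rw [hS₁, Finset.mul_sum, ← Finset.Ico_add_one_right_eq_Icc, Finset.sum_Ico_eq_sum_range]
    simp only [hg, Nat.succ_sub_one, Nat.add_sub_cancel, add_comm 1]
  have hIccsplit : ∑ n ∈ Finset.Icc M (p - 1), g n =
      g M + ∑ n ∈ Finset.Icc (M + 1) (p - 1), g n := by
    have : Finset.Icc M (p - 1) = insert M (Finset.Icc (M + 1) (p - 1)) := by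
      ext x; simp only [Finset.mem_Icc, Finset.mem_insert]; omega
    rw [this, Finset.sum_insert (by simp)]
  -- assemble
  rw [hchoose, ← mul_assoc, hsign, hIccsplit]
  linear_combination hS₁g + hsplit + hzero
end

section
/- For any odd prime p and any positive integer m with m < p, the congruence (-1)^{m-1} C(p-1,m) ≡ -1 - (∑_{m ≤ n ≤ p-1} 1/n - 1/m)·p - (∑_{m ≤ n₁ ≤ n₂ ≤ p-1} 1/(n₁n₂) - (1/m)∑_{m ≤ n ≤ p-1} 1/n)·p² (mod p³) holds, where inverses are taken modulo p³. -/
open Finset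

private lemma step_ring {R : Type*} [CommRing R] (p c X X1 S1 S2 : R)
    (h1 : X * (1 - p * c) = X1)
    (h2 : X1 = -1 - (S1 - c) * p - (S2 - c * S1) * p ^ 2)
    (h3 : p ^ 3 = 0) :
    X = -1 - S1 * p - S2 * p ^ 2 := by
  have hX : X = X1 * (1 + p * c + p ^ 2 * c ^ 2) := by
    linear_combination (1 + p * c + p ^ 2 * c ^ 2) * h1 + X * c ^ 3 * h3
  rw [hX, h2]
  linear_combination (-(S1 - c) * c ^ 2 - (S2 - c * S1) * c - (S2 - c * S1) * c ^ 2 * p) * h3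

private lemma binom_aux (p : ℕ) (hp : p.Prime) (hp2 : p ≠ 2) :
    ∀ k m : ℕ, 0 < m → m + k = p - 1 →
    ((-1 : ZMod (p ^ 3)) ^ (m - 1) * ((p - 1).choose m : ZMod (p ^ 3))) =
      -1 -
        ((∑ n ∈ Finset.Icc m (p - 1), (n : ZMod (p ^ 3))⁻¹) - (m : ZMod (p ^ 3))⁻¹) * p -
        ((∑ n₂ ∈ Finset.Icc m (p - 1), ∑ n₁ ∈ Finset.Icc m n₂,
            (n₁ : ZMod (p ^ 3))⁻¹ * (n₂ : ZMod (p ^ 3))⁻¹) -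
          (m : ZMod (p ^ 3))⁻¹ * ∑ n ∈ Finset.Icc m (p - 1), (n : ZMod (p ^ 3))⁻¹) * (p : ZMod (p ^ 3)) ^ 2 := by
  have hp3 : 3 ≤ p := by
    have h2 := hp.two_le
    rcases Nat.lt_or_ge p 3 with h | h
    · interval_cases p
      · exact absurd rfl hp2
    · exact h
  have hpcube : (p : ZMod (p ^ 3)) ^ 3 = 0 := by
    have h : ((p ^ 3 : ℕ) : ZMod (p ^ 3)) = 0 := ZMod.natCast_self _
    push_cast at h; exact h
  have hinv : ∀ n : ℕ, 0 < n → n < p → (n : ZMod (p ^ 3)) * (n : ZMod (p ^ 3))⁻¹ = 1 := by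
    intro n hn hnp
    apply ZMod.mul_inv_of_unit
    rw [ZMod.isUnit_iff_coprime]
    refine (Nat.coprime_pow_right_iff (by norm_num) _ _).mpr ?_
    refine Nat.Coprime.symm (hp.coprime_iff_not_dvd.mpr ?_)
    exact fun h => absurd (Nat.le_of_dvd hn h) (by omega)
  intro k
  induction k with
  | zero =>
    intro m hm hmk
    have hmeq : m = p - 1 := by omega
    subst hmeq
    have hodd : Odd (p - 1 - 1) := by
      rcases hp.odd_of_ne_two hp2 with ⟨t, ht⟩
      exact ⟨t - 1, by omega⟩
    simp only [Nat.choose_self, Nat.cast_one, Finset.Icc_self, Finset.sum_singleton,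
      hodd.neg_one_pow]
    ring
  | succ k ih =>
    intro m hm hmk
    have hIH := ih (m + 1) (by omega) (by omega)
    have hm1p : m + 1 < p := by omega
    have hmp1 : m ≤ p - 1 := by omega
    have hsplit : ∀ f : ℕ → ZMod (p ^ 3), ∀ b : ℕ, m ≤ b →
        ∑ n ∈ Icc m b, f n = f m + ∑ n ∈ Icc (m + 1) b, f n := by
      intro f b hb
      rw [Finset.Icc_add_one_left_eq_Ioc,
        ← Finset.Ioc_insert_left hb, Finset.sum_insert Finset.left_notMem_Ioc]
    obtain ⟨n, rfl⟩ := Nat.exists_eq_succ_of_ne_zero hm.ne'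
    set c : ZMod (p ^ 3) := ((n + 1 + 1 : ℕ) : ZMod (p ^ 3))⁻¹ with hc
    have hcu : ((n + 1 + 1 : ℕ) : ZMod (p ^ 3)) * c = 1 := hinv (n + 1 + 1) (by omega) hm1p
    -- the recurrence via the choose identity
    have hchoose := Nat.choose_succ_right_eq (p - 1) (n + 1)
    rw [show p - 1 - (n + 1) = p - (n + 1 + 1) from by omega] at hchoose
    have hcast : ((p - 1).choose (n + 1 + 1) : ZMod (p ^ 3)) * ((n + 1 + 1 : ℕ) : ZMod (p ^ 3))
        = ((p - 1).choose (n + 1) : ZMod (p ^ 3)) *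
          ((p : ZMod (p ^ 3)) - ((n + 1 + 1 : ℕ) : ZMod (p ^ 3))) := by
      have h2 := congrArg (Nat.cast : ℕ → ZMod (p ^ 3)) hchoose
      rwa [Nat.cast_mul, Nat.cast_mul, Nat.cast_sub (by omega : n + 1 + 1 ≤ p)] at h2
    have hmul : ((-1 : ZMod (p ^ 3)) ^ n * ((p - 1).choose (n + 1) : ZMod (p ^ 3))) *
        (1 - (p : ZMod (p ^ 3)) * c)
        = (-1 : ZMod (p ^ 3)) ^ (n + 1) * ((p - 1).choose (n + 1 + 1) : ZMod (p ^ 3)) := by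
      linear_combination ((-1 : ZMod (p ^ 3)) ^ n * c) * hcast -
        ((-1 : ZMod (p ^ 3)) ^ n * (((p - 1).choose (n + 1) : ZMod (p ^ 3)) +
          ((p - 1).choose (n + 1 + 1) : ZMod (p ^ 3)))) * hcu
    -- split the sums
    have hS1 : (∑ x ∈ Icc (n + 1) (p - 1), (x : ZMod (p ^ 3))⁻¹)
        = ((n + 1 : ℕ) : ZMod (p ^ 3))⁻¹ + ∑ x ∈ Icc (n + 1 + 1) (p - 1), (x : ZMod (p ^ 3))⁻¹ :=
      hsplit (fun x => (x : ZMod (p ^ 3))⁻¹) (p - 1) hmp1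
    have hS2 : (∑ n₂ ∈ Icc (n + 1) (p - 1), ∑ n₁ ∈ Icc (n + 1) n₂,
          (n₁ : ZMod (p ^ 3))⁻¹ * (n₂ : ZMod (p ^ 3))⁻¹)
        = ((n + 1 : ℕ) : ZMod (p ^ 3))⁻¹ * ((n + 1 : ℕ) : ZMod (p ^ 3))⁻¹
          + ((n + 1 : ℕ) : ZMod (p ^ 3))⁻¹ * (∑ x ∈ Icc (n + 1 + 1) (p - 1), (x : ZMod (p ^ 3))⁻¹)
          + ∑ n₂ ∈ Icc (n + 1 + 1) (p - 1), ∑ n₁ ∈ Icc (n + 1 + 1) n₂,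
              (n₁ : ZMod (p ^ 3))⁻¹ * (n₂ : ZMod (p ^ 3))⁻¹ := by
      rw [hsplit (fun n₂ => ∑ n₁ ∈ Icc (n + 1) n₂,
          (n₁ : ZMod (p ^ 3))⁻¹ * (n₂ : ZMod (p ^ 3))⁻¹) (p - 1) hmp1]
      rw [Finset.Icc_self, Finset.sum_singleton]
      rw [Finset.sum_congr rfl (fun (n₂ : ℕ) hn₂ =>
        hsplit (fun n₁ => (n₁ : ZMod (p ^ 3))⁻¹ * ((n₂ : ℕ) : ZMod (p ^ 3))⁻¹) n₂
          (by have := (Finset.mem_Icc.mp hn₂).1; omega))]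
      rw [Finset.sum_add_distrib, ← Finset.mul_sum]
      ring
    simp only [Nat.succ_eq_add_one, Nat.add_sub_cancel] at hIH ⊢
    rw [hS1, hS2]
    rw [step_ring (p : ZMod (p ^ 3)) c _ _ _ _ hmul hIH hpcube]
    ring

theorem binom_congruence_mod_p_cube (p : ℕ) (hp : p.Prime) (hp2 : p ≠ 2)
    (m : ℕ) (hm : 0 < m) (hmp : m < p) :
    ((-1 : ZMod (p ^ 3)) ^ (m - 1) * ((p - 1).choose m : ZMod (p ^ 3))) =
      -1 -
        ((∑ n ∈ Finset.Icc m (p - 1), (n : ZMod (p ^ 3))⁻¹) - (m : ZMod (p ^ 3))⁻¹) * p -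
        ((∑ n₂ ∈ Finset.Icc m (p - 1), ∑ n₁ ∈ Finset.Icc m n₂,
            (n₁ : ZMod (p ^ 3))⁻¹ * (n₂ : ZMod (p ^ 3))⁻¹) -
          (m : ZMod (p ^ 3))⁻¹ * ∑ n ∈ Finset.Icc m (p - 1), (n : ZMod (p ^ 3))⁻¹) * (p : ZMod (p ^ 3)) ^ 2 := by
  exact binom_aux p hp hp2 (p - 1 - m) m hm (by have := hp.two_le; omega)
end

section
/- (Antipode-type relation for multiple harmonic sums) For any positive integer N and any index (k_1,...,k_r), the identity ∑_{j=0}^{r} (-1)^j ζ_N(k_j,...,k_1) · ζ_N^⋆(k_{j+1},...,k_r) = 0 holds, where ζ_N(l_1,...,l_m) := ∑_{1 ≤ n_1 < ... < n_m ≤ N} 1/(n_1^{l_1}···n_m^{l_m}) and ζ_N^⋆(l_1,...,l_m) := ∑_{1 ≤ n_1 ≤ ... ≤ n_m ≤ N} 1/(n_1^{l_1}···n_m^{l_m}), with ζ_N(∅) = ζ_N^⋆(∅) := 1. -/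
/-- Strictly increasing tuples `1 ≤ m 0 < ⋯ < m (r-1) ≤ N`. -/
def schains (r N : ℕ) : Finset (Fin r → ℕ) :=
  (Fintype.piFinset fun _ => Finset.Icc 1 N).filter fun m => ∀ i j : Fin r, i < j → m i < m j

/-- Multiple harmonic sum `ζ_N(k)` (strict inequalities); `ζ_N(∅) = 1`. -/
def zeta (N : ℕ) (k : List ℕ) : ℚ :=
  ∑ m ∈ schains k.length N, ∏ i : Fin k.length, (1 : ℚ) / (m i : ℚ) ^ k.get i

open Finset

def Aset (r N j : ℕ) : Finset (Fin r → ℕ) :=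
  (Fintype.piFinset fun _ => Finset.Icc 1 N).filter fun x =>
    (∀ a b : Fin r, a < b → (b : ℕ) < j → x b < x a) ∧
    (∀ a b : Fin r, a ≤ b → j ≤ (a : ℕ) → x a ≤ x b)

def Eset (r N j : ℕ) : Finset (Fin r → ℕ) :=
  (Fintype.piFinset fun _ => Finset.Icc 1 N).filter fun x =>
    (∀ a b : Fin r, a < b → (b : ℕ) < j → x b < x a) ∧
    (∀ a b : Fin r, a ≤ b → j ≤ (a : ℕ) + 1 → x a ≤ x b)

lemma Aset_zero (r N : ℕ) : Aset r N 0 = Eset r N 1 := by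
  unfold Aset Eset
  apply Finset.filter_congr
  intro x _
  constructor
  · rintro ⟨h1, h2⟩
    refine ⟨fun a b hab hb => ?_, fun a b hab _ => h2 a b hab (Nat.zero_le _)⟩
    have := Fin.lt_def.mp hab
    omega
  · rintro ⟨h1, h2⟩
    exact ⟨fun a b hab hb => by omega, fun a b hab _ => h2 a b hab (by omega)⟩

lemma Aset_top (r N : ℕ) : Aset r N r = Eset r N r := by
  unfold Aset Eset
  apply Finset.filter_congr
  intro x _
  constructor
  · rintro ⟨h1, h2⟩
    refine ⟨h1, fun a b hab ha => ?_⟩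
    have hab' := Fin.le_def.mp hab
    have hb := b.isLt
    have : a = b := Fin.ext (by omega)
    rw [this]
  · rintro ⟨h1, h2⟩
    refine ⟨h1, fun a b hab ha => ?_⟩
    exact absurd a.isLt (by omega)

lemma Aset_split (r N j : ℕ) (h1 : 1 ≤ j) (h2 : j < r) (f : (Fin r → ℕ) → ℚ) :
    ∑ x ∈ Aset r N j, f x = ∑ x ∈ Eset r N j, f x + ∑ x ∈ Eset r N (j+1), f x := by
  have hj1 : j - 1 < r := by omega
  have hEj : Eset r N j = (Aset r N j).filter (fun x => x ⟨j-1, hj1⟩ ≤ x ⟨j, h2⟩) := by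
    unfold Aset Eset
    rw [Finset.filter_filter]
    apply Finset.filter_congr
    intro x _
    constructor
    · rintro ⟨ha, hb⟩
      exact ⟨⟨ha, fun a b hab haj => hb a b hab (by omega)⟩,
        hb ⟨j-1, hj1⟩ ⟨j, h2⟩ (Fin.le_def.mpr (by simp only [Fin.val_mk]; omega))
          (by simp only [Fin.val_mk]; omega)⟩
    · rintro ⟨⟨ha, hb⟩, hc⟩
      refine ⟨ha, fun a b hab haj => ?_⟩
      rcases Nat.lt_or_ge (a : ℕ) j with haj' | haj'
      · have ha' : a = ⟨j-1, hj1⟩ := Fin.ext (by simp only [Fin.val_mk]; omega)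
        rcases Nat.lt_or_ge (b : ℕ) j with hbj | hbj
        · have hb' : b = ⟨j-1, hj1⟩ := Fin.ext (by
            have := Fin.le_def.mp hab; simp only [Fin.val_mk]; omega)
          rw [ha', hb']
        · calc x a = x ⟨j-1, hj1⟩ := by rw [ha']
            _ ≤ x ⟨j, h2⟩ := hc
            _ ≤ x b := hb ⟨j, h2⟩ b (Fin.le_def.mpr (by simp only [Fin.val_mk]; omega))
                (by simp only [Fin.val_mk]; omega)
      · exact hb a b hab haj'
  have hEj1 : Eset r N (j+1) = (Aset r N j).filter (fun x => ¬ x ⟨j-1, hj1⟩ ≤ x ⟨j, h2⟩) := by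
    unfold Aset Eset
    rw [Finset.filter_filter]
    apply Finset.filter_congr
    intro x _
    constructor
    · rintro ⟨ha, hb⟩
      refine ⟨⟨fun a b hab hbj => ha a b hab (by omega),
        fun a b hab haj => hb a b hab (by omega)⟩, ?_⟩
      have := ha ⟨j-1, hj1⟩ ⟨j, h2⟩ (Fin.lt_def.mpr (by simp only [Fin.val_mk]; omega))
        (by simp only [Fin.val_mk]; omega)
      omega
    · rintro ⟨⟨ha, hb⟩, hc⟩
      have hcc : x ⟨j, h2⟩ < x ⟨j-1, hj1⟩ := by omega
      refine ⟨fun a b hab hbj => ?_, fun a b hab haj => hb a b hab (by omega)⟩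
      rcases Nat.lt_or_ge (b : ℕ) j with hbj' | hbj'
      · exact ha a b hab hbj'
      · have hb' : b = ⟨j, h2⟩ := Fin.ext (by simp only [Fin.val_mk]; omega)
        have haj' : (a : ℕ) < j := by have := Fin.lt_def.mp hab; omega
        rcases Nat.lt_or_ge (a : ℕ) (j-1) with haj'' | haj''
        · calc x b = x ⟨j, h2⟩ := by rw [hb']
            _ < x ⟨j-1, hj1⟩ := hcc
            _ < x a := ha a ⟨j-1, hj1⟩ (Fin.lt_def.mpr (by simp only [Fin.val_mk]; omega))
                (by simp only [Fin.val_mk]; omega)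
        · have ha' : a = ⟨j-1, hj1⟩ := Fin.ext (by simp only [Fin.val_mk]; omega)
          rw [ha', hb']; exact hcc
  rw [hEj, hEj1, Finset.sum_filter_add_sum_filter_not]

lemma prod_eq_mixed (K : ℕ → ℕ) (N r j : ℕ) (hj : j ≤ r) :
    (∑ m ∈ schains j N, ∏ i : Fin j, (1 : ℚ) / (m i : ℚ) ^ K (j - 1 - (i : ℕ))) *
      (∑ n ∈ wchains (r - j) N, ∏ i : Fin (r - j), (1 : ℚ) / (n i : ℚ) ^ K (j + (i : ℕ))) =
    ∑ x ∈ Aset r N j, ∏ i : Fin r, (1 : ℚ) / (x i : ℚ) ^ K (i : ℕ) := by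
  rw [Finset.sum_mul_sum, ← Finset.sum_product']
  apply Finset.sum_nbij'
    (i := fun (p : (Fin j → ℕ) × (Fin (r - j) → ℕ)) => fun a : Fin r =>
      if h : (a : ℕ) < j then p.1 ⟨j - 1 - (a : ℕ), by omega⟩ else p.2 ⟨(a : ℕ) - j, by omega⟩)
    (j := fun (x : Fin r → ℕ) => (fun a : Fin j => x ⟨j - 1 - (a : ℕ), by omega⟩,
                    fun b : Fin (r - j) => x ⟨j + (b : ℕ), by omega⟩))
  · rintro ⟨m, n⟩ hp
    rw [Finset.mem_product] at hp
    obtain ⟨hm, hn⟩ := hp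
    unfold schains at hm; unfold wchains at hn
    rw [Finset.mem_filter, Fintype.mem_piFinset] at hm hn
    unfold Aset
    rw [Finset.mem_filter, Fintype.mem_piFinset]
    refine ⟨fun a => ?_, fun a b hab hbj => ?_, fun a b hab haj => ?_⟩
    · by_cases h : (a : ℕ) < j
      · simp only [h, dif_pos]; exact hm.1 _
      · simp only [h, dif_neg, not_false_iff]; exact hn.1 _
    · have hab' := Fin.lt_def.mp hab
      have haj : (a : ℕ) < j := by omega
      simp only [haj, hbj, dif_pos]
      exact hm.2 _ _ (Fin.lt_def.mpr (by simp only [Fin.val_mk]; omega))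
    · have hab' := Fin.le_def.mp hab
      have hbj : ¬ (b : ℕ) < j := by omega
      have haj' : ¬ (a : ℕ) < j := by omega
      simp only [haj', hbj, dif_neg, not_false_iff]
      exact hn.2 _ _ (Fin.le_def.mpr (by simp only [Fin.val_mk]; omega))
  · intro x hx
    unfold Aset at hx
    rw [Finset.mem_filter, Fintype.mem_piFinset] at hx
    obtain ⟨hx1, hx2, hx3⟩ := hx
    rw [Finset.mem_product]
    constructor
    · unfold schains
      rw [Finset.mem_filter, Fintype.mem_piFinset]
      refine ⟨fun a => hx1 _, fun a b hab => ?_⟩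
      have hab' := Fin.lt_def.mp hab
      have hb := b.isLt
      exact hx2 ⟨j - 1 - (b : ℕ), by omega⟩ ⟨j - 1 - (a : ℕ), by omega⟩
        (Fin.lt_def.mpr (by simp only [Fin.val_mk]; omega)) (by simp only [Fin.val_mk]; omega)
    · unfold wchains
      rw [Finset.mem_filter, Fintype.mem_piFinset]
      refine ⟨fun a => hx1 _, fun a b hab => ?_⟩
      have hab' := Fin.le_def.mp hab
      exact hx3 ⟨j + (a : ℕ), by omega⟩ ⟨j + (b : ℕ), by omega⟩
        (Fin.le_def.mpr (by simp only [Fin.val_mk]; omega)) (by simp only [Fin.val_mk]; omega)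
  · rintro ⟨m, n⟩ hp
    refine Prod.ext ?_ ?_
    · funext a
      have ha : (a : ℕ) < j := a.isLt
      have h1 : (⟨j - 1 - (a : ℕ), by omega⟩ : Fin r).val < j := by
        simp only [Fin.val_mk]; omega
      simp only [dif_pos h1]
      congr 1
      exact Fin.ext (by simp only [Fin.val_mk]; omega)
    · funext b
      have hb : (b : ℕ) < r - j := b.isLt
      have h1 : ¬ (⟨j + (b : ℕ), by omega⟩ : Fin r).val < j := by
        simp only [Fin.val_mk]; omega
      simp only [dif_neg h1]
      congr 1
      exact Fin.ext (by simp only [Fin.val_mk]; omega)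
  · intro x hx
    funext a
    by_cases h : (a : ℕ) < j
    · simp only [h, dif_pos]
      congr 1
      exact Fin.ext (by simp only [Fin.val_mk]; omega)
    · simp only [h, dif_neg, not_false_iff]
      congr 1
      exact Fin.ext (by simp only [Fin.val_mk]; have := a.isLt; omega)
  · rintro ⟨m, n⟩ hp
    have hsum : j + (r - j) = r := by omega
    set e : Fin j ⊕ Fin (r - j) ≃ Fin r := finSumFinEquiv.trans (finCongr hsum) with he
    refine Eq.trans ?_ (Equiv.prod_comp e _)
    rw [Fintype.prod_sum_type]
    have hea : ∀ a : Fin j, ((e (Sum.inl a) : Fin r) : ℕ) = (a : ℕ) := by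
      intro a; rw [he]; simp [finCongr]
    have heb : ∀ b : Fin (r - j), ((e (Sum.inr b) : Fin r) : ℕ) = j + (b : ℕ) := by
      intro b; rw [he]; simp [finCongr]
    congr 1
    · rw [← Equiv.prod_comp Fin.revPerm
        (fun i : Fin j => (1 : ℚ) / ((m, n).1 i : ℚ) ^ K (j - 1 - (i : ℕ)))]
      apply Finset.prod_congr rfl
      intro a _
      beta_reduce
      have ha : (a : ℕ) < j := a.isLt
      have h1 : (Fin.revPerm a : Fin j) = ⟨j - 1 - (a : ℕ), by omega⟩ :=
        Fin.ext (by simp [Fin.rev]; omega)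
      rw [h1, dif_pos (show ((e (Sum.inl a) : Fin r) : ℕ) < j by rw [hea]; exact ha)]
      congr 2
      simp only [Fin.val_mk, hea]
      congr 1
      omega
    · apply Finset.prod_congr rfl
      intro b _
      beta_reduce
      rw [dif_neg (show ¬ ((e (Sum.inr b) : Fin r) : ℕ) < j by rw [heb]; omega)]
      congr 2
      have hb2 : (⟨((e (Sum.inr b) : Fin r) : ℕ) - j, by have := (e (Sum.inr b)).isLt; have := b.isLt; omega⟩ : Fin (r - j)) = b :=
        Fin.ext (by simp only [Fin.val_mk, heb]; omega)
      rw [hb2]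

lemma zeta_eq (N : ℕ) (l : List ℕ) (K : ℕ → ℕ) (j : ℕ) (hl : l.length = j)
    (hget : ∀ i : Fin l.length, l.get i = K (j - 1 - (i : ℕ))) :
    zeta N l = ∑ m ∈ schains j N, ∏ i : Fin j, (1 : ℚ) / (m i : ℚ) ^ K (j - 1 - (i : ℕ)) := by
  subst hl
  unfold zeta
  exact Finset.sum_congr rfl fun m _ => Finset.prod_congr rfl fun i _ => by rw [hget]

lemma zetaStar_eq (N : ℕ) (l : List ℕ) (K : ℕ → ℕ) (j d : ℕ) (hl : l.length = d)
    (hget : ∀ i : Fin l.length, l.get i = K (j + (i : ℕ))) :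
    zetaStar N l = ∑ n ∈ wchains d N, ∏ i : Fin d, (1 : ℚ) / (n i : ℚ) ^ K (j + (i : ℕ)) := by
  subst hl
  unfold zetaStar
  exact Finset.sum_congr rfl fun m _ => Finset.prod_congr rfl fun i _ => by rw [hget]

theorem antipode_relation (N : ℕ) (hN : 0 < N) (k : List ℕ) (hk : k ≠ [])
    (hpos : ∀ x ∈ k, 0 < x) :
    ∑ j ∈ Finset.range (k.length + 1),
        (-1 : ℚ) ^ j * zeta N ((k.take j).reverse) * zetaStar N (k.drop j) = 0 := by
  set r := k.length with hr
  have hr1 : 1 ≤ r := by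
    cases k with
    | nil => exact absurd rfl hk
    | cons a l => simp [hr]
  set K : ℕ → ℕ := fun i => k.getD i 0 with hK
  set w : (Fin r → ℕ) → ℚ := fun x => ∏ i : Fin r, (1 : ℚ) / (x i : ℚ) ^ K (i : ℕ) with hw
  set S : ℕ → ℚ := fun j => ∑ x ∈ Aset r N j, w x with hS
  set E : ℕ → ℚ := fun j => ∑ x ∈ Eset r N j, w x with hE
  -- rewrite each summand
  have hterm : ∀ j ∈ Finset.range (r + 1),
      (-1 : ℚ) ^ j * zeta N ((k.take j).reverse) * zetaStar N (k.drop j) = (-1 : ℚ) ^ j * S j := by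
    intro j hjmem
    rw [Finset.mem_range] at hjmem
    have hj : j ≤ r := by omega
    have hlen1 : ((k.take j).reverse).length = j := by simp [hr]; omega
    have hlen2 : (k.drop j).length = r - j := by simp [hr]
    have hget1 : ∀ i : Fin ((k.take j).reverse).length,
        ((k.take j).reverse).get i = K (j - 1 - (i : ℕ)) := by
      intro i
      have hi : (i : ℕ) < j := by have := i.isLt; omega
      have h1 : j - 1 - (i : ℕ) < k.length := by omega
      simp only [List.get_eq_getElem, List.getElem_reverse, List.getElem_take, hK]
      rw [List.getD_eq_getElem k 0 h1]
      congr 1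
      simp only [List.length_take, List.length_reverse]
      omega
    have hget2 : ∀ i : Fin (k.drop j).length,
        (k.drop j).get i = K (j + (i : ℕ)) := by
      intro i
      have hi : (i : ℕ) < r - j := by have := i.isLt; omega
      have h1 : j + (i : ℕ) < k.length := by omega
      simp only [List.get_eq_getElem, List.getElem_drop, hK]
      rw [List.getD_eq_getElem k 0 h1]
    rw [zeta_eq N _ K j hlen1 hget1, zetaStar_eq N _ K j (r - j) hlen2 hget2]
    rw [mul_assoc, prod_eq_mixed K N r j hj]
  rw [Finset.sum_congr rfl hterm]
  -- now telescoping
  have hS0 : S 0 = E 1 := by simp only [hS, hE, Aset_zero]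
  have hSr : S r = E r := by simp only [hS, hE, Aset_top]
  have hmid : ∀ j, 1 ≤ j → j < r → S j = E j + E (j + 1) := fun j h1 h2 =>
    Aset_split r N j h1 h2 w
  set g : ℕ → ℚ := fun j => if j = 0 then 0 else (-1 : ℚ) ^ j * E j with hg
  have hstep : ∀ j < r, (-1 : ℚ) ^ j * S j = g j - g (j + 1) := by
    intro j hjr
    rcases Nat.eq_zero_or_pos j with h0 | h0
    · subst h0
      simp [hg, hS0]
    · rw [hmid j h0 hjr]
      simp only [hg, if_neg (by omega : ¬ j = 0), if_neg (by omega : ¬ j + 1 = 0)]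
      rw [pow_succ]
      ring
  rw [Finset.sum_range_succ, Finset.sum_congr rfl (fun j hj => hstep j (Finset.mem_range.mp hj)),
    Finset.sum_range_sub' g r]
  simp only [hg, if_pos rfl, if_neg (by omega : ¬ r = 0), hSr]
  ring
end

section
/- (Sum formula mod p) For integers k > r ≥ 1 and almost all primes p, the congruence ∑_{(k_1,...,k_r), k_1+...+k_r = k, all k_i ≥ 1} ∑_{1 ≤ m_1 < ... < m_r ≤ p-1} 1/(m_1^{k_1}···m_r^{k_r}) ≡ 0 (mod p) holds; likewise with non-strict inequalities m_1 ≤ ... ≤ m_r. -/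
/-- `I_{k,r}`: tuples of positive integers of length `r` summing to `k`. -/
def Iset (k r : ℕ) : Finset (Fin r → ℕ) :=
  (Fintype.piFinset fun _ => Finset.Icc 1 k).filter fun f => ∑ i, f i = k

/-- The multiple harmonic sum `ζ_N(k)` computed in `ℤ/Mℤ` (inverses mod `M`). -/
def zetaZ (M N : ℕ) {r : ℕ} (k : Fin r → ℕ) : ZMod M :=
  ∑ m ∈ schains r N, ∏ i, ((m i : ZMod M)⁻¹) ^ (k i)

/-- The star multiple harmonic sum `ζ_N^⋆(k)` computed in `ℤ/Mℤ` (inverses mod `M`). -/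
def zetaStarZ (M N : ℕ) {r : ℕ} (k : Fin r → ℕ) : ZMod M :=
  ∑ m ∈ wchains r N, ∏ i, ((m i : ZMod M)⁻¹) ^ (k i)

namespace SumFormulaAux

/-- The multiset of values of a tuple. -/
def Mval {r : ℕ} (m : Fin r → ℕ) : Multiset ℕ := Multiset.map m Finset.univ.val

lemma Mval_eq_ofFn {r : ℕ} (m : Fin r → ℕ) : Mval m = (List.ofFn m : Multiset ℕ) := by
  simp [Mval]

lemma mem_Mval {r : ℕ} {m : Fin r → ℕ} {x : ℕ} : x ∈ Mval m ↔ ∃ i, m i = x := by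
  simp [Mval, List.mem_ofFn, eq_comm]

lemma Mval_comp_perm {r : ℕ} (m : Fin r → ℕ) (σ : Equiv.Perm (Fin r)) :
    Mval (m ∘ σ) = Mval m := by
  unfold Mval
  rw [show Multiset.map (m ∘ ⇑σ) Finset.univ.val
      = Multiset.map m (Multiset.map (⇑σ) Finset.univ.val) from (Multiset.map_map m σ _).symm]
  congr 1
  have h : (Finset.univ.map σ.toEmbedding) = Finset.univ := Finset.map_univ_equiv σ
  calc Multiset.map (⇑σ) Finset.univ.val = (Finset.univ.map σ.toEmbedding).val := rfl
    _ = Finset.univ.val := by rw [h]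

lemma Mval_comp {r : ℕ} (f : ℕ → ℕ) (m : Fin r → ℕ) :
    Mval (f ∘ m) = Multiset.map f (Mval m) := by
  unfold Mval
  exact (Multiset.map_map f m _).symm

lemma mono_unique {r : ℕ} {f g : Fin r → ℕ} (hf : Monotone f) (hg : Monotone g)
    (h : Mval f = Mval g) : f = g := by
  rw [Mval_eq_ofFn, Mval_eq_ofFn, Multiset.coe_eq_coe] at h
  exact List.ofFn_injective (h.eq_of_sortedLE hf.sortedLE_ofFn hg.sortedLE_ofFn)

lemma strictMono_iff {r : ℕ} {m : Fin r → ℕ} :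
    StrictMono m ↔ Monotone m ∧ (Mval m).Nodup := by
  constructor
  · intro h
    exact ⟨h.monotone, Multiset.Nodup.map h.injective Finset.univ.nodup⟩
  · rintro ⟨h1, h2⟩
    refine h1.strictMono_of_injective ?_
    intro i j hij
    exact Multiset.inj_on_of_nodup_map h2 i (Finset.mem_val.mpr (Finset.mem_univ i))
      j (Finset.mem_val.mpr (Finset.mem_univ j)) hij

/-- The symmetrized inner sum over compositions. -/
def G (p k r : ℕ) (w : Fin r → ZMod p) : ZMod p :=
  ∑ kk ∈ Iset k r, ∏ i, (w i)⁻¹ ^ kk i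

lemma mem_Iset {k r : ℕ} {f : Fin r → ℕ} :
    f ∈ Iset k r ↔ (∀ i, f i ∈ Finset.Icc 1 k) ∧ ∑ i, f i = k := by
  simp [Iset, Fintype.mem_piFinset]

lemma G_comp_perm (p k r : ℕ) (w : Fin r → ZMod p) (σ : Equiv.Perm (Fin r)) :
    G p k r (w ∘ σ) = G p k r w := by
  unfold G
  refine Finset.sum_nbij' (fun kk => kk ∘ ⇑σ⁻¹) (fun kk => kk ∘ ⇑σ) ?_ ?_ ?_ ?_ ?_
  · intro kk hkk
    obtain ⟨h1, h2⟩ := mem_Iset.mp hkk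
    refine mem_Iset.mpr ⟨fun i => h1 _, ?_⟩
    rw [← h2]
    exact Equiv.sum_comp σ⁻¹ kk
  · intro kk hkk
    obtain ⟨h1, h2⟩ := mem_Iset.mp hkk
    refine mem_Iset.mpr ⟨fun i => h1 _, ?_⟩
    rw [← h2]
    exact Equiv.sum_comp σ kk
  · intro kk _; funext i; simp
  · intro kk _; funext i; simp
  · intro kk _
    calc ∏ i, ((w ∘ ⇑σ) i)⁻¹ ^ kk i
        = ∏ i, (w (σ i))⁻¹ ^ (kk ∘ ⇑σ⁻¹) (σ i) := by
          apply Finset.prod_congr rfl; intro i _; simp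
      _ = ∏ j, (w j)⁻¹ ^ (kk ∘ ⇑σ⁻¹) j := Equiv.prod_comp σ (fun j => (w j)⁻¹ ^ (kk ∘ ⇑σ⁻¹) j)

lemma G_smul (p k r : ℕ) [Fact p.Prime] (d : ZMod p) (w : Fin r → ZMod p) :
    G p k r (fun i => d * w i) = (d⁻¹) ^ k * G p k r w := by
  unfold G
  rw [Finset.mul_sum]
  apply Finset.sum_congr rfl
  intro kk hkk
  obtain ⟨-, hsum⟩ := mem_Iset.mp hkk
  calc ∏ i, (d * w i)⁻¹ ^ kk i = ∏ i, (d⁻¹ ^ kk i * (w i)⁻¹ ^ kk i) := by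
        apply Finset.prod_congr rfl; intro i _; rw [mul_inv, mul_pow]
    _ = (∏ i, d⁻¹ ^ kk i) * ∏ i, (w i)⁻¹ ^ kk i := Finset.prod_mul_distrib
    _ = d⁻¹ ^ k * ∏ i, (w i)⁻¹ ^ kk i := by
        rw [Finset.prod_pow_eq_pow_sum, hsum]

lemma fd_mem (p : ℕ) [Fact p.Prime] (d : (ZMod p)ˣ) {x : ℕ}
    (hx : x ∈ Finset.Icc 1 (p - 1)) :
    ((d : ZMod p) * (x : ZMod p)).val ∈ Finset.Icc 1 (p - 1) := by
  obtain ⟨hx1, hx2⟩ := Finset.mem_Icc.mp hx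
  have hp2 : 2 ≤ p := (Fact.out : p.Prime).two_le
  have hxp : x < p := by omega
  have hx0 : (x : ZMod p) ≠ 0 := by
    intro h
    have hv := ZMod.val_cast_of_lt hxp
    rw [h, ZMod.val_zero] at hv
    omega
  have hne : (d : ZMod p) * (x : ZMod p) ≠ 0 := mul_ne_zero (Units.ne_zero d) hx0
  have h0 : ((d : ZMod p) * (x : ZMod p)).val ≠ 0 :=
    fun h => hne ((ZMod.val_eq_zero _).mp h)
  have hlt : ((d : ZMod p) * (x : ZMod p)).val < p := ZMod.val_lt _
  exact Finset.mem_Icc.mpr ⟨by omega, by omega⟩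

lemma fd_left_inv (p : ℕ) [Fact p.Prime] (d : (ZMod p)ˣ) {x : ℕ} (hx : x < p) :
    (((d⁻¹ : (ZMod p)ˣ) : ZMod p) *
      (((((d : ZMod p) * (x : ZMod p)).val : ℕ) : ZMod p))).val = x := by
  rw [ZMod.natCast_zmod_val, ← mul_assoc, Units.inv_mul, one_mul, ZMod.val_cast_of_lt hx]

lemma key (p k r : ℕ) [hp : Fact p.Prime] (hk0 : 0 < k) (hkp : k < p - 1)
    (F : Finset (Fin r → ℕ))
    (hmono : ∀ m ∈ F, Monotone m)
    (hrange : ∀ m ∈ F, ∀ i, m i ∈ Finset.Icc 1 (p - 1))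
    (hclosed : ∀ c : (ZMod p)ˣ, ∀ m ∈ F, ∀ g : Fin r → ℕ, Monotone g →
      (∀ i, g i ∈ Finset.Icc 1 (p - 1)) →
      Mval g = Multiset.map (fun x : ℕ => ((c : ZMod p) * (x : ZMod p)).val) (Mval m) →
      g ∈ F) :
    ∑ m ∈ F, G p k r (fun i => ((m i : ℕ) : ZMod p)) = 0 := by
  obtain ⟨c, hc⟩ := IsCyclic.exists_generator (α := (ZMod p)ˣ)
  have hord : orderOf c = p - 1 := by
    rw [orderOf_eq_card_of_forall_mem_zpowers hc, Nat.card_eq_fintype_card, ZMod.card_units]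
  set fd : (ZMod p)ˣ → ℕ → ℕ := fun d x => ((d : ZMod p) * (x : ZMod p)).val with hfd
  set φ : (ZMod p)ˣ → (Fin r → ℕ) → (Fin r → ℕ) :=
    fun d m => (fd d ∘ m) ∘ ⇑(Tuple.sort (fd d ∘ m)) with hφ
  have hMvalφ : ∀ d m, Mval (φ d m) = Multiset.map (fd d) (Mval m) := by
    intro d m
    rw [hφ]
    rw [Mval_comp_perm, Mval_comp]
  have hmonoφ : ∀ d m, Monotone (φ d m) := fun d m => Tuple.monotone_sort _
  have hrangeφ : ∀ d, ∀ m ∈ F, ∀ i, φ d m i ∈ Finset.Icc 1 (p - 1) := by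
    intro d m hm i
    exact fd_mem p d (hrange m hm _)
  have hφF : ∀ d, ∀ m ∈ F, φ d m ∈ F := fun d m hm =>
    hclosed d m hm _ (hmonoφ d m) (hrangeφ d m hm) (hMvalφ d m)
  have hleft : ∀ d, ∀ m ∈ F, φ d⁻¹ (φ d m) = m := by
    intro d m hm
    refine mono_unique (hmonoφ _ _) (hmono m hm) ?_
    rw [hMvalφ, hMvalφ, Multiset.map_map]
    rw [show Multiset.map (fd d⁻¹ ∘ fd d) (Mval m) = Multiset.map id (Mval m) from ?_,
      Multiset.map_id]
    apply Multiset.map_congr rfl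
    intro x hx
    obtain ⟨i, hi⟩ := mem_Mval.mp hx
    have hxp : x < p := by
      have h1 := Finset.mem_Icc.mp (hrange m hm i)
      have hp2 : 2 ≤ p := (Fact.out : p.Prime).two_le
      omega
    exact fd_left_inv p d hxp
  have hcastφ : ∀ d, ∀ m ∈ F, (fun i => ((φ d m i : ℕ) : ZMod p))
      = (fun i => (d : ZMod p) * ((m i : ℕ) : ZMod p)) ∘ ⇑(Tuple.sort (fd d ∘ m)) := by
    intro d m _
    funext i
    simp only [hφ, Function.comp_apply, hfd]
    rw [ZMod.natCast_zmod_val]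
  have hH : ∀ d, ∀ m ∈ F, G p k r (fun i => ((φ d m i : ℕ) : ZMod p))
      = ((d : ZMod p))⁻¹ ^ k * G p k r (fun i => ((m i : ℕ) : ZMod p)) := by
    intro d m hm
    rw [hcastφ d m hm, G_comp_perm, G_smul]
  set S := ∑ m ∈ F, G p k r (fun i => ((m i : ℕ) : ZMod p)) with hS
  have hfix : ((c : ZMod p))⁻¹ ^ k * S = S := by
    rw [hS, Finset.mul_sum]
    refine Finset.sum_nbij' (fun m => φ c m) (fun m => φ c⁻¹ m)
      (fun m hm => hφF c m hm) (fun m hm => hφF c⁻¹ m hm)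
      (fun m hm => hleft c m hm) (fun m hm => ?_) (fun m hm => (hH c m hm).symm)
    have h := hleft c⁻¹ m hm
    rwa [inv_inv] at h
  have hne1 : ((c : ZMod p))⁻¹ ^ k ≠ 1 := by
    intro h
    have h2 : ((c : ZMod p)) ^ k = 1 := by
      rw [inv_pow, inv_eq_one] at h
      exact h
    have h3 : c ^ k = 1 := by
      apply Units.ext
      rw [Units.val_pow_eq_pow_val, h2, Units.val_one]
    have h4 : orderOf c ∣ k := orderOf_dvd_of_pow_eq_one h3
    rw [hord] at h4
    have := Nat.le_of_dvd hk0 h4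
    omega
  have hz : (((c : ZMod p))⁻¹ ^ k - 1) * S = 0 := by
    rw [sub_mul, one_mul, hfix, sub_self]
  rcases mul_eq_zero.mp hz with h | h
  · exact absurd (sub_eq_zero.mp h) hne1
  · exact h

lemma mem_schains {r N : ℕ} {m : Fin r → ℕ} :
    m ∈ schains r N ↔ (∀ i, m i ∈ Finset.Icc 1 N) ∧ StrictMono m := by
  constructor
  · intro h
    rw [schains, Finset.mem_filter, Fintype.mem_piFinset] at h
    exact ⟨h.1, fun i j hij => h.2 i j hij⟩
  · intro h
    rw [schains, Finset.mem_filter, Fintype.mem_piFinset]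
    exact ⟨h.1, fun i j hij => h.2 hij⟩

lemma mem_wchains {r N : ℕ} {m : Fin r → ℕ} :
    m ∈ wchains r N ↔ (∀ i, m i ∈ Finset.Icc 1 N) ∧ Monotone m := by
  constructor
  · intro h
    rw [wchains, Finset.mem_filter, Fintype.mem_piFinset] at h
    exact ⟨h.1, fun i j hij => h.2 i j hij⟩
  · intro h
    rw [wchains, Finset.mem_filter, Fintype.mem_piFinset]
    exact ⟨h.1, fun i j hij => h.2 hij⟩

end SumFormulaAux

theorem sum_formula_mod_p (k r : ℕ) (hr : 1 ≤ r) (hrk : r < k) :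
    ∃ P : ℕ, ∀ p : ℕ, p.Prime → P < p →
      (∑ kk ∈ Iset k r, zetaZ p (p - 1) kk) = 0 ∧
      (∑ kk ∈ Iset k r, zetaStarZ p (p - 1) kk) = 0 := by
  refine ⟨k + 1, fun p hp hP => ?_⟩
  haveI : Fact p.Prime := ⟨hp⟩
  have hp2 : 2 ≤ p := hp.two_le
  have hk0 : 0 < k := by omega
  have hkp : k < p - 1 := by omega
  constructor
  · have hswap : ∑ kk ∈ Iset k r, zetaZ p (p - 1) kk
        = ∑ m ∈ schains r (p - 1), SumFormulaAux.G p k r (fun i => ((m i : ℕ) : ZMod p)) := by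
      unfold zetaZ SumFormulaAux.G
      rw [Finset.sum_comm]
    rw [hswap]
    apply SumFormulaAux.key p k r hk0 hkp
    · intro m hm
      exact (SumFormulaAux.mem_schains.mp hm).2.monotone
    · intro m hm
      exact (SumFormulaAux.mem_schains.mp hm).1
    · intro cu m hm g hgmono hgrange hMval
      obtain ⟨hm1, hm2⟩ := SumFormulaAux.mem_schains.mp hm
      refine SumFormulaAux.mem_schains.mpr ⟨hgrange, ?_⟩
      rw [SumFormulaAux.strictMono_iff]
      refine ⟨hgmono, ?_⟩
      rw [hMval]
      have hnodup : (SumFormulaAux.Mval m).Nodup :=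
        (SumFormulaAux.strictMono_iff.mp hm2).2
      refine Multiset.Nodup.map_on ?_ hnodup
      intro x hx y hy hxy
      obtain ⟨i, hi⟩ := SumFormulaAux.mem_Mval.mp hx
      obtain ⟨j, hj⟩ := SumFormulaAux.mem_Mval.mp hy
      have hxp : x < p := by
        have := Finset.mem_Icc.mp (hi ▸ hm1 i)
        omega
      have hyp : y < p := by
        have := Finset.mem_Icc.mp (hj ▸ hm1 j)
        omega
      calc x = (((cu⁻¹ : (ZMod p)ˣ) : ZMod p) *
            (((((cu : ZMod p) * (x : ZMod p)).val : ℕ) : ZMod p))).val :=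
            (SumFormulaAux.fd_left_inv p cu hxp).symm
        _ = (((cu⁻¹ : (ZMod p)ˣ) : ZMod p) *
            (((((cu : ZMod p) * (y : ZMod p)).val : ℕ) : ZMod p))).val := by rw [hxy]
        _ = y := SumFormulaAux.fd_left_inv p cu hyp
  · have hswap : ∑ kk ∈ Iset k r, zetaStarZ p (p - 1) kk
        = ∑ m ∈ wchains r (p - 1), SumFormulaAux.G p k r (fun i => ((m i : ℕ) : ZMod p)) := by
      unfold zetaStarZ SumFormulaAux.G
      rw [Finset.sum_comm]
    rw [hswap]
    apply SumFormulaAux.key p k r hk0 hkp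
    · intro m hm
      exact (SumFormulaAux.mem_wchains.mp hm).2
    · intro m hm
      exact (SumFormulaAux.mem_wchains.mp hm).1
    · intro cu m hm g hgmono hgrange _
      exact SumFormulaAux.mem_wchains.mpr ⟨hgrange, hgmono⟩
end
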